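/- arXiv:0801.2991 — 2 statements merged into one kernel-verified Lean document; each statement's English description precedes it below -/
import Mathlib

section
/- Assume (A₁) (causality) and (A₂) (strong controllability). Then the Schur complement S = H − K L⁻¹ Kᵗ of L in Λ and the matrix Λ itself are invertible, and Λ⁻¹ is the block matrix [[L⁻¹ + L⁻¹KᵗS⁻¹KL⁻¹, −L⁻¹KᵗS⁻¹], [−S⁻¹KL⁻¹, S⁻¹]]. -/
open MeasureTheory ProbabilityTheory Filter Matrix Finset
open scoped Topology Kronecker

noncomputable section

abbrev Mat (d : ℕ) := Matrix (Fin d) (Fin d) ℝ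

/-- The index set for the regression vector `Φ_n`:
`p` blocks of size `d` (past outputs) followed by `q` blocks of size `d` (past inputs). -/
abbrev RegIdx (d p q : ℕ) := (Fin p × Fin d) ⊕ (Fin q × Fin d)

/-- The matrix polynomial `B(z) = I + B₁ z + ⋯ + B_q z^q`, over `ℂ`. -/
def Bpoly {d : ℕ} (B : ℕ → Mat d) (q : ℕ) (z : ℂ) : Matrix (Fin d) (Fin d) ℂ :=
  1 + ∑ j ∈ Finset.Icc 1 q, z ^ j • (B j).map (fun r => (r : ℂ))

/-- Causality assumption (A₁): `det B(z) ≠ 0` for all `|z| ≤ 1`. -/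
def Causal {d : ℕ} (B : ℕ → Mat d) (q : ℕ) : Prop :=
  ∀ z : ℂ, ‖z‖ ≤ 1 → (Bpoly B q z).det ≠ 0

/-- `P` is the coefficient sequence of the formal power series
`B(z)⁻¹ (A(z) - I) = ∑_{k ≥ 1} P_k z^k`, expressed through the coefficient
identities of `B(z) · (∑ P_k z^k) = A(z) - I`, where `A(z) = I - ∑_{k=1}^p A_k z^k`
is encoded by `A : ℕ → Mat d` supported on `{1, …, p}` (so the coefficient of
`A(z) - I` at `z^k`, `k ≥ 1`, is `-(A k)`). The convention `P_m = 0` for `m ≤ 0`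
is realized by `P 0 = 0` together with truncated subtraction on `ℕ`. -/
def IsPSeq {d : ℕ} (A B : ℕ → Mat d) (q : ℕ) (P : ℕ → Mat d) : Prop :=
  P 0 = 0 ∧ ∀ k, 1 ≤ k → P k + ∑ j ∈ Finset.Icc 1 q, B j * P (k - j) = -(A k)

/-- The `dq × dq` matrix `Π` whose `(i,j)` block (`1 ≤ i, j ≤ q`) is `P_{p+j-i}`. -/
def PiMat {d : ℕ} (P : ℕ → Mat d) (p q : ℕ) :
    Matrix (Fin q × Fin d) (Fin q × Fin d) ℝ :=
  fun ia jb => P (p + (jb.1 : ℕ) - (ia.1 : ℕ)) ia.2 jb.2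

/-- `H_i = ∑_{k=i}^∞ P_k Γ P_{k-i+1}ᵗ`. -/
def Hmat {d : ℕ} (P : ℕ → Mat d) (Γ : Mat d) (i : ℕ) : Mat d :=
  ∑' m : ℕ, P (i + m) * Γ * (P (m + 1))ᵀ

/-- The `dq × dq` matrix `H` with `(i,j)` block `H_{j-i+1}` if `j ≥ i` and `H_{i-j+1}ᵗ` else. -/
def Hblk {d : ℕ} (P : ℕ → Mat d) (Γ : Mat d) (q : ℕ) :
    Matrix (Fin q × Fin d) (Fin q × Fin d) ℝ :=
  fun ia jb =>
    if (ia.1 : ℕ) ≤ (jb.1 : ℕ) then Hmat P Γ ((jb.1 : ℕ) - (ia.1 : ℕ) + 1) ia.2 jb.2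
    else Hmat P Γ ((ia.1 : ℕ) - (jb.1 : ℕ) + 1) jb.2 ia.2

/-- The `dq × dp` matrix `K` with `(i,j)` block `P_{j-i} Γ` if `j > i` and `0` else. -/
def Kblk {d : ℕ} (P : ℕ → Mat d) (Γ : Mat d) (p q : ℕ) :
    Matrix (Fin q × Fin d) (Fin p × Fin d) ℝ :=
  fun ia jb =>
    if (ia.1 : ℕ) < (jb.1 : ℕ) then (P ((jb.1 : ℕ) - (ia.1 : ℕ)) * Γ) ia.2 jb.2 else 0

/-- The `dp × dp` block-diagonal matrix `L = diag(Γ, …, Γ)`. -/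
def Lblk {d : ℕ} (Γ : Mat d) (p : ℕ) : Matrix (Fin p × Fin d) (Fin p × Fin d) ℝ :=
  fun ia jb => if ia.1 = jb.1 then Γ ia.2 jb.2 else 0

/-- The limiting matrix `Λ = [[L, Kᵗ], [K, H]]`. -/
def Lam {d : ℕ} (P : ℕ → Mat d) (Γ : Mat d) (p q : ℕ) :
    Matrix (RegIdx d p q) (RegIdx d p q) ℝ :=
  Matrix.fromBlocks (Lblk Γ p) (Kblk P Γ p q)ᵀ (Kblk P Γ p q) (Hblk P Γ q)

/-- The Schur complement `S = H - K L⁻¹ Kᵗ` of `L` in `Λ`. -/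
def SchurS {d : ℕ} (P : ℕ → Mat d) (Γ : Mat d) (p q : ℕ) :
    Matrix (Fin q × Fin d) (Fin q × Fin d) ℝ :=
  Hblk P Γ q - Kblk P Γ p q * (Lblk Γ p)⁻¹ * (Kblk P Γ p q)ᵀ

/-- Squared Euclidean norm of a finitely indexed vector. -/
def nrmSq {ι : Type*} [Fintype ι] (u : ι → ℝ) : ℝ := ∑ i, (u i) ^ 2

/-- Euclidean norm of a finitely indexed vector. -/
def nrm {ι : Type*} [Fintype ι] (u : ι → ℝ) : ℝ := Real.sqrt (nrmSq u)

/-- Squared Frobenius norm of a matrix. -/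
def frobSq {ι κ : Type*} [Fintype ι] [Fintype κ] (M : Matrix ι κ ℝ) : ℝ :=
  ∑ i, ∑ j, (M i j) ^ 2

/-- Frobenius norm of a matrix. -/
def frobNrm {ι κ : Type*} [Fintype ι] [Fintype κ] (M : Matrix ι κ ℝ) : ℝ :=
  Real.sqrt (frobSq M)

/-- The set of (real) eigenvalues of a matrix. -/
def eigSet {ι : Type*} [Fintype ι] (M : Matrix ι ι ℝ) : Set ℝ :=
  {r : ℝ | ∃ v : ι → ℝ, v ≠ 0 ∧ M.mulVec v = r • v}

/-- Largest eigenvalue. -/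
def lamMax {ι : Type*} [Fintype ι] (M : Matrix ι ι ℝ) : ℝ := sSup (eigSet M)

/-- Smallest eigenvalue. -/
def lamMin {ι : Type*} [Fintype ι] (M : Matrix ι ι ℝ) : ℝ := sInf (eigSet M)

variable {Ω : Type*}

/-- The regression vector `Φ_n = (X_n, …, X_{n-p+1}, U_{n-1}, …, U_{n-q})`
(with the convention that negative time indices are truncated at `0`). -/
def Phi {d : ℕ} (p q : ℕ) (X U : ℕ → Ω → Fin d → ℝ) (n : ℕ) (ω : Ω) :
    RegIdx d p q → ℝ :=
  Sum.elim (fun ib => X (n - (ib.1 : ℕ)) ω ib.2) (fun jb => U (n - 1 - (jb.1 : ℕ)) ω jb.2)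

/-- `S_n = ∑_{k=0}^n Φ_k Φ_kᵗ + I`. -/
def SLS {d : ℕ} (p q : ℕ) (X U : ℕ → Ω → Fin d → ℝ) (n : ℕ) (ω : Ω) :
    Matrix (RegIdx d p q) (RegIdx d p q) ℝ :=
  (∑ k ∈ Finset.range (n + 1), vecMulVec (Phi p q X U k ω) (Phi p q X U k ω)) + 1

/-- `s_n = ∑_{k=0}^n ‖Φ_k‖²`. -/
def sPhi {d : ℕ} (p q : ℕ) (X U : ℕ → Ω → Fin d → ℝ) (n : ℕ) (ω : Ω) : ℝ :=
  ∑ k ∈ Finset.range (n + 1), nrmSq (Phi p q X U k ω)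

/-- The weights `a_n = (log s_n)^{-(1+γ)}`, with `a_n = 1` when `log s_n ≤ 1`. -/
def wt {d : ℕ} (p q : ℕ) (X U : ℕ → Ω → Fin d → ℝ) (γ : ℝ) (n : ℕ) (ω : Ω) : ℝ :=
  if Real.log (sPhi p q X U n ω) ≤ 1 then 1
  else Real.log (sPhi p q X U n ω) ^ (-(1 + γ))

/-- `S_n(a) = ∑_{k=0}^n a_k Φ_k Φ_kᵗ + I`. -/
def SWLS {d : ℕ} (p q : ℕ) (X U : ℕ → Ω → Fin d → ℝ) (γ : ℝ) (n : ℕ) (ω : Ω) :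
    Matrix (RegIdx d p q) (RegIdx d p q) ℝ :=
  (∑ k ∈ Finset.range (n + 1),
    wt p q X U γ k ω • vecMulVec (Phi p q X U k ω) (Phi p q X U k ω)) + 1

/-- Average cost matrix `C_n = n⁻¹ ∑_{k=1}^n (X_k - x_k)(X_k - x_k)ᵗ`. -/
def Cmat {d : ℕ} (X xref : ℕ → Ω → Fin d → ℝ) (n : ℕ) (ω : Ω) : Mat d :=
  (n : ℝ)⁻¹ • ∑ k ∈ Finset.Icc 1 n, vecMulVec (X k ω - xref k ω) (X k ω - xref k ω)

/-- Empirical covariance `Γ_n = n⁻¹ ∑_{k=1}^n ε_k ε_kᵗ`. -/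
def Gmat {d : ℕ} (ε : ℕ → Ω → Fin d → ℝ) (n : ℕ) (ω : Ω) : Mat d :=
  (n : ℝ)⁻¹ • ∑ k ∈ Finset.Icc 1 n, vecMulVec (ε k ω) (ε k ω)

namespace SchurAux

variable {d : ℕ}

lemma det_diffOn {n : ℕ} {M : ℂ → Matrix (Fin n) (Fin n) ℂ} {s : Set ℂ}
    (h : ∀ a b, DifferentiableOn ℂ (fun z => M z a b) s) :
    DifferentiableOn ℂ (fun z => (M z).det) s := by
  simp only [Matrix.det_apply']
  exact DifferentiableOn.fun_sum fun σ _ =>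
    (DifferentiableOn.fun_finsetProd fun i _ => h (σ i) i).const_mul _

lemma bpoly_entry_diff (B : ℕ → Mat d) (q : ℕ) (a b : Fin d) :
    Differentiable ℂ (fun z => Bpoly B q z a b) := by
  have : (fun z => Bpoly B q z a b) = fun z =>
      (1 : Matrix (Fin d) (Fin d) ℂ) a b
        + ∑ j ∈ Finset.Icc 1 q, z ^ j * ((B j).map (fun r => (r : ℂ))) a b := by
    funext z
    simp [Bpoly, Matrix.add_apply, Matrix.sum_apply, Matrix.smul_apply, smul_eq_mul]
  rw [this]
  exact (differentiable_const _).add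
    (Differentiable.fun_sum fun j _ => (differentiable_pow j).fun_mul (differentiable_const _))

lemma exists_R (B : ℕ → Mat d) (q : ℕ) (hA1 : Causal B q) :
    ∃ R : NNReal, 1 < (R : ℝ) ∧ ∀ z : ℂ, ‖z‖ ≤ (R : ℝ) → (Bpoly B q z).det ≠ 0 := by
  have hcont : Continuous fun z => (Bpoly B q z).det := by
    have hd : Differentiable ℂ fun z => (Bpoly B q z).det := by
      rw [← differentiableOn_univ]
      exact det_diffOn (fun a b => (bpoly_entry_diff B q a b).differentiableOn)
    exact hd.continuous
  have hopen : IsOpen {z : ℂ | (Bpoly B q z).det ≠ 0} :=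
    isOpen_compl_singleton.preimage hcont
  have hsub : Metric.closedBall (0 : ℂ) 1 ⊆ {z : ℂ | (Bpoly B q z).det ≠ 0} := by
    intro z hz
    exact hA1 z (by simpa [Metric.mem_closedBall, dist_zero_right] using hz)
  obtain ⟨δ, hδ, hsub2⟩ :=
    (isCompact_closedBall (0 : ℂ) 1).exists_cthickening_subset_open hopen hsub
  refine ⟨(1 + δ).toNNReal, by simp [Real.coe_toNNReal _ (by positivity : (0:ℝ) ≤ 1 + δ), hδ], ?_⟩
  intro z hz
  have hmem : z ∈ Metric.cthickening δ (Metric.closedBall (0 : ℂ) 1) := by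
    rw [cthickening_closedBall hδ.le zero_le_one]
    rw [Real.coe_toNNReal _ (by positivity : (0:ℝ) ≤ 1 + δ)] at hz
    simpa [Metric.mem_closedBall, dist_zero_right, add_comm] using hz
  exact hsub2 hmem

def Gpoly (A : ℕ → Mat d) (p : ℕ) (z : ℂ) : Matrix (Fin d) (Fin d) ℂ :=
  -(∑ k ∈ Finset.Icc 1 p, z ^ k • (A k).map (fun r => (r : ℂ)))

def FF (A B : ℕ → Mat d) (p q : ℕ) (z : ℂ) : Matrix (Fin d) (Fin d) ℂ :=
  (Bpoly B q z)⁻¹ * Gpoly A p z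

lemma gpoly_entry_diff (A : ℕ → Mat d) (p : ℕ) (a b : Fin d) :
    Differentiable ℂ fun z => Gpoly A p z a b := by
  have : (fun z => Gpoly A p z a b) = fun z =>
      -(∑ k ∈ Finset.Icc 1 p, z ^ k * ((A k).map (fun r => (r : ℂ))) a b) := by
    funext z
    simp [Gpoly, Matrix.neg_apply, Matrix.sum_apply, Matrix.smul_apply, smul_eq_mul]
  rw [this]
  exact (Differentiable.fun_sum fun j _ => (differentiable_pow j).fun_mul (differentiable_const _)).neg

lemma adjugate_entry_diff (B : ℕ → Mat d) (q : ℕ) (a c : Fin d) :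
    Differentiable ℂ (fun z => (Bpoly B q z).adjugate a c) := by
  simp only [Matrix.adjugate_apply]
  rw [← differentiableOn_univ]
  apply det_diffOn
  intro a' b'
  simp only [Matrix.updateRow_apply]
  by_cases h : a' = c
  · simp [h]
  · simp only [h, if_false]
    exact (bpoly_entry_diff B q a' b').differentiableOn

lemma ff_entry_diffOn (A B : ℕ → Mat d) (p q : ℕ) {R : ℝ}
    (hdet : ∀ z : ℂ, ‖z‖ ≤ R → (Bpoly B q z).det ≠ 0) (a b : Fin d) :
    DifferentiableOn ℂ (fun z => FF A B p q z a b) (Metric.closedBall 0 R) := by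
  have heq : (fun z => FF A B p q z a b) = fun z =>
      ((Bpoly B q z).det)⁻¹ * ∑ c, (Bpoly B q z).adjugate a c * Gpoly A p z c b := by
    funext z
    rw [FF, Matrix.inv_def, Matrix.smul_mul, Matrix.smul_apply, Ring.inverse_eq_inv,
      smul_eq_mul, Matrix.mul_apply]
  rw [heq]
  have hmem : ∀ z ∈ Metric.closedBall (0 : ℂ) R, (Bpoly B q z).det ≠ 0 := by
    intro z hz
    exact hdet z (by simpa [Metric.mem_closedBall, dist_zero_right] using hz)
  refine DifferentiableOn.mul ?_ ?_
  · exact DifferentiableOn.inv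
      (det_diffOn fun a' b' => (bpoly_entry_diff B q a' b').differentiableOn) hmem
  · exact DifferentiableOn.fun_sum fun c _ =>
      ((adjugate_entry_diff B q a c).differentiableOn).fun_mul
        ((gpoly_entry_diff A p c b).differentiableOn)

lemma coeffs_eq_zero (u : ℕ → ℂ) (M : ℝ) (hbd : ∀ n, ‖u n‖ ≤ M)
    (h : ∀ z : ℂ, ‖z‖ < 1 → HasSum (fun n => u n * z ^ n) 0) : ∀ n, u n = 0 := by
  set ps : FormalMultilinearSeries ℂ ℂ ℂ :=
    fun n => ContinuousMultilinearMap.mkPiRing ℂ (Fin n) (u n) with hps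
  have hball : HasFPowerSeriesOnBall (0 : ℂ → ℂ) ps 0 1 := by
    refine ⟨?_, one_pos, ?_⟩
    · have := ps.le_radius_of_bound M (r := 1) fun n => by
        simpa [hps, ContinuousMultilinearMap.norm_mkPiRing] using hbd n
      simpa using this
    · intro y hy
      have hy1 : ‖y‖ < 1 := by
        have h1 := mem_emetric_ball_zero_iff.mp hy
        have h2 : ‖y‖₊ < 1 := by simpa [enorm] using h1
        exact_mod_cast h2
      have hh := h y hy1
      have heq : (fun n => ps n fun _ => y) = fun n => u n * y ^ n := by
        funext n
        simp [hps, ContinuousMultilinearMap.mkPiRing_apply, smul_eq_mul, mul_comm]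
      rw [heq]
      simpa using hh
  intro n
  have hz : ps = 0 := hball.hasFPowerSeriesAt.eq_zero
  have h2 : ps n = 0 := by rw [hz]; rfl
  have h3 := congrFun (congrArg DFunLike.coe h2) (fun _ => 1)
  simpa [hps, ContinuousMultilinearMap.mkPiRing_apply] using h3

lemma exists_coeff_bound {d p q : ℕ} (A B P : ℕ → Mat d)
    (hA : ∀ k, k = 0 ∨ p < k → A k = 0)
    (hP : IsPSeq A B q P) (hA1 : Causal B q) :
    ∃ C : ℝ, 0 ≤ C ∧ ∃ r : ℝ, 0 < r ∧ r < 1 ∧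
      ∀ k, ∀ a b : Fin d, |P k a b| ≤ C * r ^ k := by
  obtain ⟨R, hR1, hRdet⟩ := exists_R B q hA1
  have hR0 : 0 < R := by
    have h : (0:ℝ) < (R:ℝ) := lt_trans one_pos hR1
    exact_mod_cast h
  have hfp : ∀ a b : Fin d,
      HasFPowerSeriesOnBall (fun z => FF A B p q z a b)
        (cauchyPowerSeries (fun z => FF A B p q z a b) 0 R) 0 R :=
    fun a b => (ff_entry_diffOn A B p q hRdet a b).hasFPowerSeriesOnBall hR0
  set c : ℕ → Matrix (Fin d) (Fin d) ℂ :=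
    fun n a b => (cauchyPowerSeries (fun z => FF A B p q z a b) 0 R).coeff n with hc
  have hsum : ∀ z : ℂ, ‖z‖ < (R:ℝ) → ∀ a b : Fin d,
      HasSum (fun n => c n a b * z ^ n) (FF A B p q z a b) := by
    intro z hz a b
    have hmem : z ∈ EMetric.ball (0:ℂ) R := by
      change z ∈ Metric.eball (0:ℂ) R
      rw [mem_emetric_ball_zero_iff, enorm_eq_nnnorm]
      exact_mod_cast hz
    have h0 := (hfp a b).hasSum hmem
    simp only [FormalMultilinearSeries.apply_eq_pow_smul_coeff, smul_eq_mul, zero_add] at h0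
    simpa [hc, mul_comm] using h0
  set r₀ : NNReal := (1 + R) / 2 with hr₀
  have h1r₀ : 1 < (r₀ : ℝ) := by
    rw [hr₀]
    push_cast
    linarith
  have hr₀R : (r₀ : ℝ) < (R : ℝ) := by
    rw [hr₀]
    push_cast
    linarith
  have hr₀pos : (0:ℝ) < (r₀ : ℝ) := lt_trans one_pos h1r₀
  have hbd : ∀ a b : Fin d, ∃ C : ℝ, 0 ≤ C ∧ ∀ n, ‖c n a b‖ ≤ C * ((r₀:ℝ)⁻¹) ^ n := by
    intro a b
    have hrad : (r₀ : ENNReal) < (cauchyPowerSeries (fun z => FF A B p q z a b) 0 R).radius := by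
      refine lt_of_lt_of_le ?_ (hfp a b).r_le
      exact_mod_cast hr₀R
    obtain ⟨C, hCpos, hC⟩ :=
      (cauchyPowerSeries (fun z => FF A B p q z a b) 0 R).norm_mul_pow_le_of_lt_radius hrad
    refine ⟨C, hCpos.le, fun n => ?_⟩
    have h1 : ‖c n a b‖ ≤ ‖cauchyPowerSeries (fun z => FF A B p q z a b) 0 R n‖ := by
      have h2 := (cauchyPowerSeries (fun z => FF A B p q z a b) 0 R n).le_opNorm (fun _ => (1:ℂ))
      have h3 : c n a b = (cauchyPowerSeries (fun z => FF A B p q z a b) 0 R n) (fun _ => (1:ℂ)) := rfl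
      rw [h3]
      simpa using h2
    have h4 : ‖c n a b‖ * (r₀:ℝ) ^ n ≤ C :=
      le_trans (mul_le_mul_of_nonneg_right h1 (pow_nonneg hr₀pos.le n)) (hC n)
    have h5 : ‖c n a b‖ ≤ C / (r₀:ℝ) ^ n := (le_div_iff₀ (pow_pos hr₀pos n)).mpr h4
    simpa [div_eq_mul_inv, inv_pow] using h5
  choose Cf hCf0 hCf using hbd
  set Cg : ℝ := ∑ a : Fin d, ∑ b : Fin d, Cf a b with hCg
  have hCg0 : 0 ≤ Cg := Finset.sum_nonneg fun a _ => Finset.sum_nonneg fun b _ => hCf0 a b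
  have hCfle : ∀ a b : Fin d, Cf a b ≤ Cg := by
    intro a b
    calc Cf a b ≤ ∑ b' : Fin d, Cf a b' :=
          Finset.single_le_sum (fun b' _ => hCf0 a b') (Finset.mem_univ b)
      _ ≤ Cg := Finset.single_le_sum (f := fun a' => ∑ b' : Fin d, Cf a' b')
          (fun a' _ => Finset.sum_nonneg fun b' _ => hCf0 a' b') (Finset.mem_univ a)
  have hcbd : ∀ n, ∀ a b : Fin d, ‖c n a b‖ ≤ Cg * ((r₀:ℝ)⁻¹) ^ n := fun n a b =>
    le_trans (hCf a b n) (mul_le_mul_of_nonneg_right (hCfle a b) (by positivity))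
  have hcbd1 : ∀ n, ∀ a b : Fin d, ‖c n a b‖ ≤ Cg := by
    intro n a b
    refine le_trans (hcbd n a b) ?_
    have hle1 : ((r₀:ℝ)⁻¹) ^ n ≤ 1 :=
      pow_le_one₀ (by positivity) (inv_le_one_of_one_le₀ h1r₀.le)
    exact mul_le_of_le_one_right hCg0 hle1
  have hFF0 : ∀ a b : Fin d, FF A B p q 0 a b = 0 := by
    intro a b
    have hG : Gpoly A p (0:ℂ) = 0 := by
      rw [Gpoly, Finset.sum_eq_zero, neg_zero]
      intro k hk
      have h1 : 1 ≤ k := (Finset.mem_Icc.mp hk).1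
      rw [zero_pow (by omega), zero_smul]
    simp [FF, hG]
  have hc0 : c 0 = (0 : Matrix (Fin d) (Fin d) ℂ) := by
    ext a b
    have h := hsum 0 (by simpa using lt_trans one_pos hR1) a b
    have h2 : HasSum (fun n => c n a b * (0:ℂ) ^ n) (c 0 a b * (0:ℂ) ^ 0) :=
      hasSum_single 0 (fun n hn => by simp [zero_pow hn])
    have h3 := h2.unique h
    have h4 := hFF0 a b
    rw [h4] at h3
    simpa using h3
  set Mc : ℕ → Matrix (Fin d) (Fin d) ℂ :=
    fun j => if j = 0 then 1 else (B j).map (fun r => (r:ℂ)) with hMc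
  have hBeq : ∀ z : ℂ, Bpoly B q z = ∑ j ∈ Finset.range (q+1), z ^ j • Mc j := by
    intro z
    have hins : Finset.range (q+1) = insert 0 (Finset.Icc 1 q) := by
      ext x; simp [Nat.lt_succ_iff]; omega
    rw [hins, Finset.sum_insert (by simp), Bpoly]
    congr 1
    · simp [hMc]
    · refine Finset.sum_congr rfl fun j hj => ?_
      have hj0 : j ≠ 0 := by have := (Finset.mem_Icc.mp hj).1; omega
      simp [hMc, hj0]
  set D : ℕ → Matrix (Fin d) (Fin d) ℂ := fun n =>
    (∑ j ∈ Finset.range (q+1), if j ≤ n then Mc j * c (n - j) else 0)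
      + (A n).map (fun r => (r:ℂ)) with hD
  have hDsum : ∀ z : ℂ, ‖z‖ < 1 → ∀ a b : Fin d,
      HasSum (fun n => D n a b * z ^ n) 0 := by
    intro z hz a b
    have hzR : ‖z‖ < (R:ℝ) := lt_trans hz hR1
    have hdet : (Bpoly B q z).det ≠ 0 := hRdet z (le_trans hz.le hR1.le)
    have hGF : Bpoly B q z * FF A B p q z = Gpoly A p z :=
      Matrix.mul_nonsing_inv_cancel_left _ _ (Ne.isUnit hdet)
    have hj3 : ∀ j ∈ Finset.range (q+1),
        HasSum (fun n => (if j ≤ n then (Mc j * c (n - j)) a b else 0) * z ^ n)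
          (z ^ j * (Mc j * FF A B p q z) a b) := by
      intro j _
      have hj2 : HasSum (fun n => (Mc j * c n) a b * z ^ n) ((Mc j * FF A B p q z) a b) := by
        have h0 := hasSum_sum (s := Finset.univ)
          (f := fun e n => Mc j a e * (c n e b * z ^ n))
          (a := fun e => Mc j a e * FF A B p q z e b)
          (fun e _ => (hsum z hzR e b).mul_left _)
        have heq : (fun n => ∑ e, Mc j a e * (c n e b * z ^ n))
            = fun n => (Mc j * c n) a b * z ^ n := by
          funext n
          rw [Matrix.mul_apply, Finset.sum_mul]
          exact Finset.sum_congr rfl fun e _ => (mul_assoc _ _ _).symm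
        rw [heq] at h0
        rwa [← Matrix.mul_apply] at h0
      have h1 := hj2.mul_left (z ^ j)
      have hinj : Function.Injective (fun n : ℕ => n + j) := add_left_injective j
      have hvan : ∀ x ∉ Set.range (fun n : ℕ => n + j),
          (fun n => (if j ≤ n then (Mc j * c (n - j)) a b else 0) * z ^ n) x = 0 := by
        intro x hx
        have hxj : ¬ j ≤ x := by
          intro hle
          exact hx ⟨x - j, show x - j + j = x by omega⟩
        simp [hxj]
      refine (hinj.hasSum_iff hvan).mp ?_
      have heq2 : ((fun n => (if j ≤ n then (Mc j * c (n - j)) a b else 0) * z ^ n)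
          ∘ fun n : ℕ => n + j) = fun n => z ^ j * ((Mc j * c n) a b * z ^ n) := by
        funext n
        simp only [Function.comp_apply]
        rw [if_pos (by omega : j ≤ n + j), Nat.add_sub_cancel]
        ring
      rw [heq2]
      exact h1
    have hbig := hasSum_sum (s := Finset.range (q+1))
      (f := fun j n => (if j ≤ n then (Mc j * c (n - j)) a b else 0) * z ^ n)
      (a := fun j => z ^ j * (Mc j * FF A B p q z) a b) hj3
    have htarget : ∑ j ∈ Finset.range (q+1), z ^ j * (Mc j * FF A B p q z) a b
        = Gpoly A p z a b := by
      have h1 : ∑ j ∈ Finset.range (q+1), z ^ j * (Mc j * FF A B p q z) a b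
          = ((∑ j ∈ Finset.range (q+1), z ^ j • Mc j) * FF A B p q z) a b := by
        rw [Matrix.sum_mul, Matrix.sum_apply]
        refine Finset.sum_congr rfl fun j _ => ?_
        rw [Matrix.smul_mul, Matrix.smul_apply, smul_eq_mul]
      rw [h1, ← hBeq, hGF]
    rw [htarget] at hbig
    have hvanG : ∀ n ∉ Finset.range (p+1),
        (fun n => (-((A n).map (fun r => (r:ℂ)))) a b * z ^ n) n = 0 := by
      intro n hn
      have hpn : p < n := by
        simp only [Finset.mem_range, Nat.lt_succ_iff, not_le] at hn
        exact hn
      show (-((A n).map (fun r => (r:ℂ)))) a b * z ^ n = 0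
      rw [hA n (Or.inr hpn)]
      simp
    have h0G := hasSum_sum_of_ne_finset_zero (L := SummationFilter.unconditional ℕ) hvanG
    have hval : ∑ n ∈ Finset.range (p+1), (-((A n).map (fun r => (r:ℂ)))) a b * z ^ n
        = Gpoly A p z a b := by
      have hins : Finset.range (p+1) = insert 0 (Finset.Icc 1 p) := by
        ext x; simp [Nat.lt_succ_iff]; omega
      rw [hins, Finset.sum_insert (by simp)]
      have h00 : (-((A 0).map (fun r => (r:ℂ)))) a b * z ^ 0 = 0 := by
        rw [hA 0 (Or.inl rfl)]; simp
      rw [h00, zero_add, Gpoly, Matrix.neg_apply, Matrix.sum_apply, ← Finset.sum_neg_distrib]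
      refine Finset.sum_congr rfl fun k _ => ?_
      rw [Matrix.smul_apply, smul_eq_mul, Matrix.neg_apply]
      ring
    rw [hval] at h0G
    have hfinal := hbig.sub h0G
    rw [sub_self] at hfinal
    have heqD : (fun n => (∑ j ∈ Finset.range (q+1),
          (if j ≤ n then (Mc j * c (n - j)) a b else 0) * z ^ n)
        - (-((A n).map (fun r => (r:ℂ)))) a b * z ^ n) = fun n => D n a b * z ^ n := by
      funext n
      have h1 : D n a b = (∑ j ∈ Finset.range (q+1),
          (if j ≤ n then (Mc j * c (n - j)) a b else 0)) + ((A n).map (fun r => (r:ℂ))) a b := by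
        simp only [hD, Matrix.add_apply, Matrix.sum_apply]
        congr 1
        refine Finset.sum_congr rfl fun j _ => ?_
        by_cases hjn : j ≤ n <;> simp [hjn]
      rw [h1, add_mul, Finset.sum_mul, Matrix.neg_apply, neg_mul, sub_neg_eq_add]
    rw [heqD] at hfinal
    exact hfinal
  have hDbd : ∀ a b : Fin d, ∃ M : ℝ, ∀ n, ‖D n a b‖ ≤ M := by
    intro a b
    refine ⟨(∑ j ∈ Finset.range (q+1), ∑ e : Fin d, ‖Mc j a e‖ * Cg)
      + ∑ m ∈ Finset.range (p+1), ‖((A m).map (fun r => (r:ℂ))) a b‖, fun n => ?_⟩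
    have h1 : ‖D n a b‖ ≤ ‖(∑ j ∈ Finset.range (q+1),
          if j ≤ n then Mc j * c (n - j) else 0) a b‖
        + ‖((A n).map (fun r => (r:ℂ))) a b‖ := by
      simp only [hD, Matrix.add_apply]
      exact norm_add_le _ _
    refine le_trans h1 (add_le_add ?_ ?_)
    · rw [Matrix.sum_apply]
      refine le_trans (norm_sum_le _ _) (Finset.sum_le_sum fun j _ => ?_)
      by_cases hjn : j ≤ n
      · rw [if_pos hjn]
        rw [Matrix.mul_apply]
        refine le_trans (norm_sum_le _ _) (Finset.sum_le_sum fun e _ => ?_)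
        rw [norm_mul]
        exact mul_le_mul_of_nonneg_left (hcbd1 _ _ _) (norm_nonneg _)
      · rw [if_neg hjn]
        simp only [Matrix.zero_apply, norm_zero]
        exact Finset.sum_nonneg fun e _ => mul_nonneg (norm_nonneg _) hCg0
    · by_cases hnp : n ≤ p
      · exact Finset.single_le_sum (f := fun m => ‖((A m).map (fun r => (r:ℂ))) a b‖)
          (fun m _ => norm_nonneg _) (Finset.mem_range.mpr (by omega))
      · have hAn : A n = 0 := hA n (Or.inr (by omega))
        have hz0 : ((A n).map (fun r => (r:ℂ))) a b = 0 := by rw [hAn]; simp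
        rw [hz0, norm_zero]
        exact Finset.sum_nonneg fun m _ => norm_nonneg _
  have hDzero : ∀ n, D n = 0 := by
    have hz : ∀ a b : Fin d, ∀ n, D n a b = 0 := by
      intro a b
      obtain ⟨M, hM⟩ := hDbd a b
      exact coeffs_eq_zero (fun n => D n a b) M hM (fun z hz1 => hDsum z hz1 a b)
    intro n; ext a b; exact hz a b n
  have hrec : ∀ k, 1 ≤ k →
      c k + ∑ j ∈ Finset.Icc 1 q, (B j).map (fun r => (r:ℂ)) * c (k - j)
        = -((A k).map (fun r => (r:ℂ))) := by
    intro k _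
    have h0 := hDzero k
    simp only [hD] at h0
    have h1 : (∑ j ∈ Finset.range (q+1), if j ≤ k then Mc j * c (k - j) else 0)
        = -((A k).map (fun r => (r:ℂ))) := eq_neg_of_add_eq_zero_left h0
    have hsplit : Finset.range (q+1) = insert 0 (Finset.Icc 1 q) := by
      ext x; simp [Nat.lt_succ_iff]; omega
    rw [hsplit, Finset.sum_insert (by simp)] at h1
    have h2 : (if 0 ≤ k then Mc 0 * c (k - 0) else 0) = c k := by
      rw [if_pos (Nat.zero_le k), Nat.sub_zero]
      simp [hMc]
    rw [h2] at h1
    have h3 : ∀ j ∈ Finset.Icc 1 q, (if j ≤ k then Mc j * c (k - j) else 0)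
        = (B j).map (fun r => (r:ℂ)) * c (k - j) := by
      intro j hj
      have hj1 : j ≠ 0 := by have := (Finset.mem_Icc.mp hj).1; omega
      by_cases hjk : j ≤ k
      · rw [if_pos hjk]; simp [hMc, hj1]
      · rw [if_neg hjk]
        have hkj : k - j = 0 := by omega
        rw [hkj, hc0, mul_zero]
    rw [Finset.sum_congr rfl h3] at h1
    exact h1
  have hPc : ∀ k, 1 ≤ k →
      (P k).map (fun r => (r:ℂ))
        + ∑ j ∈ Finset.Icc 1 q, (B j).map (fun r => (r:ℂ)) * (P (k - j)).map (fun r => (r:ℂ))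
        = -((A k).map (fun r => (r:ℂ))) := by
    intro k hk
    ext a b
    have h := congrArg (fun M : Mat d => M a b) (hP.2 k hk)
    simp only [Matrix.add_apply, Matrix.sum_apply, Matrix.mul_apply, Matrix.neg_apply,
      Matrix.map_apply] at h ⊢
    exact_mod_cast h
  have huniq : ∀ n, c n = (P n).map (fun r => (r:ℂ)) := by
    intro n
    induction n using Nat.strong_induction_on with
    | _ n ih =>
      rcases Nat.eq_zero_or_pos n with hn | hn
      · subst hn
        rw [hc0, hP.1]
        ext a b; simp
      · have e1 := hrec n hn
        have e2 := hPc n hn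
        have hsc : ∑ j ∈ Finset.Icc 1 q, (B j).map (fun r => (r:ℂ)) * c (n - j)
            = ∑ j ∈ Finset.Icc 1 q,
              (B j).map (fun r => (r:ℂ)) * (P (n - j)).map (fun r => (r:ℂ)) := by
          refine Finset.sum_congr rfl fun j hj => ?_
          have hj1 : 1 ≤ j := (Finset.mem_Icc.mp hj).1
          rw [ih (n - j) (by omega)]
        rw [hsc] at e1
        have h := e1.trans e2.symm
        exact add_right_cancel h
  refine ⟨Cg, hCg0, ((r₀:ℝ))⁻¹, by positivity, (inv_lt_one₀ hr₀pos).mpr h1r₀, ?_⟩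
  intro k a b
  have h1 : c k a b = ((P k a b : ℝ) : ℂ) := by
    rw [huniq k]
    simp [Matrix.map_apply]
  have h2 := hcbd k a b
  rw [h1] at h2
  simpa [Real.norm_eq_abs] using h2

end SchurAux

namespace SchurAux

variable {d : ℕ}

lemma triple_apply {m1 m2 : Type*} (Γ : Mat d) (X : Matrix m1 (Fin d) ℝ)
    (Y : Matrix m2 (Fin d) ℝ) (u : m1) (v : m2) :
    (X * Γ * Yᵀ) u v = ∑ e, ∑ c1, X u c1 * Γ c1 e * Y v e := by
  rw [Matrix.mul_apply]
  refine Finset.sum_congr rfl fun e _ => ?_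
  rw [Matrix.transpose_apply, Matrix.mul_apply, Finset.sum_mul]

lemma pow_sub_le {r : ℝ} (hr : 0 < r) (hr1 : r < 1) (t i : ℕ) :
    r ^ (t - i) ≤ r⁻¹ ^ i * r ^ t := by
  have h2 : r ^ (t - i) * r ^ i ≤ r ^ t := by
    rw [← pow_add]
    exact pow_le_pow_of_le_one hr.le hr1.le (by omega)
  have h3 : r ^ (t - i) ≤ r ^ t / r ^ i := (le_div_iff₀ (pow_pos hr i)).mpr h2
  calc r ^ (t - i) ≤ r ^ t / r ^ i := h3
    _ = r⁻¹ ^ i * r ^ t := by rw [inv_pow]; ring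

lemma summable_entry (P : ℕ → Mat d) (Γ : Mat d) {C r : ℝ} (hC : 0 ≤ C) (hr : 0 < r)
    (hr1 : r < 1) (hbd : ∀ k, ∀ a b : Fin d, |P k a b| ≤ C * r ^ k)
    (i j : ℕ) (a b : Fin d) :
    Summable (fun t : ℕ => (P (t - i) * Γ * (P (t - j))ᵀ) a b) := by
  have heq : (fun t : ℕ => (P (t - i) * Γ * (P (t - j))ᵀ) a b)
      = fun t => ∑ e, ∑ c1, P (t - i) a c1 * Γ c1 e * P (t - j) b e := by
    funext t; exact triple_apply Γ _ _ a b
  rw [heq]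
  refine summable_sum fun e _ => summable_sum fun c1 _ => ?_
  have hgeom : Summable (fun t : ℕ =>
      (C * r⁻¹ ^ i * (C * r⁻¹ ^ j) * |Γ c1 e|) * (r * r) ^ t) :=
    (summable_geometric_of_lt_one (by positivity) (by nlinarith)).mul_left _
  refine Summable.of_norm_bounded hgeom fun t => ?_
  have hP1 : |P (t - i) a c1| ≤ C * (r⁻¹ ^ i * r ^ t) :=
    le_trans (hbd (t - i) a c1) (mul_le_mul_of_nonneg_left (pow_sub_le hr hr1 t i) hC)
  have hP2 : |P (t - j) b e| ≤ C * (r⁻¹ ^ j * r ^ t) :=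
    le_trans (hbd (t - j) b e) (mul_le_mul_of_nonneg_left (pow_sub_le hr hr1 t j) hC)
  have habs : ‖P (t - i) a c1 * Γ c1 e * P (t - j) b e‖
      = |P (t - i) a c1| * |Γ c1 e| * |P (t - j) b e| := by
    rw [Real.norm_eq_abs, abs_mul, abs_mul]
  rw [habs]
  calc |P (t - i) a c1| * |Γ c1 e| * |P (t - j) b e|
      ≤ (C * (r⁻¹ ^ i * r ^ t)) * |Γ c1 e| * (C * (r⁻¹ ^ j * r ^ t)) := by
        have h1 : |P (t - i) a c1| * |Γ c1 e| ≤ (C * (r⁻¹ ^ i * r ^ t)) * |Γ c1 e| :=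
          mul_le_mul_of_nonneg_right hP1 (abs_nonneg _)
        exact mul_le_mul h1 hP2 (abs_nonneg _) (by positivity)
    _ = (C * r⁻¹ ^ i * (C * r⁻¹ ^ j) * |Γ c1 e|) * (r * r) ^ t := by
        rw [mul_pow]; ring

lemma tsum_matrix_apply {M : ℕ → Mat d} (h : ∀ a b : Fin d, Summable fun t => M t a b)
    (a b : Fin d) : (∑' t, M t) a b = ∑' t, M t a b := by
  have h1 : Summable M := by
    exact Pi.summable.mpr fun a' => Pi.summable.mpr (h a')
  erw [tsum_apply h1, tsum_apply (Pi.summable.mp h1 a)]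

lemma triple_symm (Γ : Mat d) (hΓs : Γᵀ = Γ) (X Y : Mat d) (a b : Fin d) :
    (X * Γ * Yᵀ) b a = (Y * Γ * Xᵀ) a b := by
  have h : (X * Γ * Yᵀ)ᵀ = Y * Γ * Xᵀ := by
    rw [Matrix.transpose_mul, Matrix.transpose_mul, Matrix.transpose_transpose, hΓs,
      Matrix.mul_assoc]
  calc (X * Γ * Yᵀ) b a = (X * Γ * Yᵀ)ᵀ a b := by rw [Matrix.transpose_apply]
    _ = (Y * Γ * Xᵀ) a b := by rw [h]

lemma hblk_entry {q : ℕ} (P : ℕ → Mat d) (Γ : Mat d) (hP0 : P 0 = 0) (hΓs : Γᵀ = Γ)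
    (hsm : ∀ i j : ℕ, ∀ a b : Fin d, Summable (fun t : ℕ => (P (t - i) * Γ * (P (t - j))ᵀ) a b))
    (i j : Fin q) (a b : Fin d) :
    Hblk P Γ q (i, a) (j, b) = ∑' t : ℕ, (P (t - (i:ℕ)) * Γ * (P (t - (j:ℕ)))ᵀ) a b := by
  by_cases hij : (i:ℕ) ≤ (j:ℕ)
  · show (if (i:ℕ) ≤ (j:ℕ) then Hmat P Γ ((j:ℕ) - (i:ℕ) + 1) a b
      else Hmat P Γ ((i:ℕ) - (j:ℕ) + 1) b a) = _
    rw [if_pos hij, Hmat]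
    have hsmm : ∀ a' b' : Fin d,
        Summable fun m : ℕ => (P (((j:ℕ) - (i:ℕ) + 1) + m) * Γ * (P (m+1))ᵀ) a' b' := by
      intro a' b'
      have h0 := (hsm i j a' b').comp_injective (add_left_injective ((j:ℕ)+1))
      have heq : ((fun t : ℕ => (P (t - (i:ℕ)) * Γ * (P (t - (j:ℕ)))ᵀ) a' b')
          ∘ fun m => m + ((j:ℕ)+1))
          = fun m => (P (((j:ℕ) - (i:ℕ) + 1) + m) * Γ * (P (m+1))ᵀ) a' b' := by
        funext m
        simp only [Function.comp_apply]
        have e1 : m + ((j:ℕ)+1) - (i:ℕ) = ((j:ℕ) - (i:ℕ) + 1) + m := by omega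
        have e2 : m + ((j:ℕ)+1) - (j:ℕ) = m + 1 := by omega
        rw [e1, e2]
      rw [heq] at h0
      exact h0
    rw [tsum_matrix_apply hsmm a b]
    have hinj : Function.Injective (fun m : ℕ => m + ((j:ℕ)+1)) := add_left_injective _
    have hsupp : Function.support (fun t : ℕ => (P (t - (i:ℕ)) * Γ * (P (t - (j:ℕ)))ᵀ) a b)
        ⊆ Set.range (fun m : ℕ => m + ((j:ℕ)+1)) := by
      intro t ht
      by_contra hcon
      have htj : t ≤ (j:ℕ) := by
        by_contra h2
        exact hcon ⟨t - ((j:ℕ)+1), show t - ((j:ℕ)+1) + ((j:ℕ)+1) = t by omega⟩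
      apply ht
      show (P (t - (i:ℕ)) * Γ * (P (t - (j:ℕ)))ᵀ) a b = 0
      have hz : t - (j:ℕ) = 0 := by omega
      rw [hz, hP0]
      simp
    rw [← hinj.tsum_eq hsupp]
    refine tsum_congr fun m => ?_
    have e1 : m + ((j:ℕ)+1) - (i:ℕ) = ((j:ℕ) - (i:ℕ) + 1) + m := by omega
    have e2 : m + ((j:ℕ)+1) - (j:ℕ) = m + 1 := by omega
    rw [e1, e2]
  · show (if (i:ℕ) ≤ (j:ℕ) then Hmat P Γ ((j:ℕ) - (i:ℕ) + 1) a b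
      else Hmat P Γ ((i:ℕ) - (j:ℕ) + 1) b a) = _
    rw [if_neg hij, Hmat]
    have hsmm : ∀ a' b' : Fin d,
        Summable fun m : ℕ => (P (((i:ℕ) - (j:ℕ) + 1) + m) * Γ * (P (m+1))ᵀ) a' b' := by
      intro a' b'
      have h0 := (hsm j i a' b').comp_injective (add_left_injective ((i:ℕ)+1))
      have heq : ((fun t : ℕ => (P (t - (j:ℕ)) * Γ * (P (t - (i:ℕ)))ᵀ) a' b')
          ∘ fun m => m + ((i:ℕ)+1))
          = fun m => (P (((i:ℕ) - (j:ℕ) + 1) + m) * Γ * (P (m+1))ᵀ) a' b' := by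
        funext m
        simp only [Function.comp_apply]
        have e1 : m + ((i:ℕ)+1) - (j:ℕ) = ((i:ℕ) - (j:ℕ) + 1) + m := by omega
        have e2 : m + ((i:ℕ)+1) - (i:ℕ) = m + 1 := by omega
        rw [e1, e2]
      rw [heq] at h0
      exact h0
    rw [tsum_matrix_apply hsmm b a]
    have hinj : Function.Injective (fun m : ℕ => m + ((i:ℕ)+1)) := add_left_injective _
    have hsupp : Function.support (fun t : ℕ => (P (t - (i:ℕ)) * Γ * (P (t - (j:ℕ)))ᵀ) a b)
        ⊆ Set.range (fun m : ℕ => m + ((i:ℕ)+1)) := by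
      intro t ht
      by_contra hcon
      have hti : t ≤ (i:ℕ) := by
        by_contra h2
        exact hcon ⟨t - ((i:ℕ)+1), show t - ((i:ℕ)+1) + ((i:ℕ)+1) = t by omega⟩
      apply ht
      show (P (t - (i:ℕ)) * Γ * (P (t - (j:ℕ)))ᵀ) a b = 0
      have hz : t - (i:ℕ) = 0 := by omega
      rw [hz, hP0]
      simp
    rw [← hinj.tsum_eq hsupp]
    refine tsum_congr fun m => ?_
    have e1 : m + ((i:ℕ)+1) - (i:ℕ) = m + 1 := by omega
    have e2 : m + ((i:ℕ)+1) - (j:ℕ) = ((i:ℕ) - (j:ℕ) + 1) + m := by omega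
    rw [e1, e2]
    exact triple_symm Γ hΓs _ _ a b

lemma lblk_mul {p : ℕ} (Γ : Mat d) (hdet : IsUnit Γ.det) :
    Lblk Γ p * Lblk Γ⁻¹ p = 1 := by
  have hΓ : Γ * Γ⁻¹ = 1 := Matrix.mul_nonsing_inv Γ hdet
  ext ⟨i, a⟩ ⟨j, b⟩
  rw [Matrix.mul_apply, Fintype.sum_prod_type]
  simp only [Lblk, ite_mul, zero_mul, mul_ite, mul_zero, Finset.sum_ite_irrel,
    Finset.sum_const_zero, Finset.sum_ite_eq, Finset.mem_univ, if_true]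
  rw [Finset.sum_ite_eq' Finset.univ j, if_pos (Finset.mem_univ j), ← Matrix.mul_apply, hΓ]
  by_cases hij : i = j <;> by_cases hab : a = b <;>
    simp [hij, hab, Matrix.one_apply, Prod.ext_iff]

end SchurAux

namespace SchurAux

variable {d : ℕ}

lemma kblk_eq {p q : ℕ} (P : ℕ → Mat d) (Γ : Mat d) (hP0 : P 0 = 0)
    (ia : Fin q × Fin d) (le : Fin p × Fin d) :
    Kblk P Γ p q ia le = (P ((le.1:ℕ) - (ia.1:ℕ)) * Γ) ia.2 le.2 := by
  show (if (ia.1:ℕ) < (le.1:ℕ) then (P ((le.1:ℕ) - (ia.1:ℕ)) * Γ) ia.2 le.2 else 0) = _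
  by_cases h : (ia.1:ℕ) < (le.1:ℕ)
  · rw [if_pos h]
  · rw [if_neg h]
    have hz : (le.1:ℕ) - (ia.1:ℕ) = 0 := by omega
    rw [hz, hP0, Matrix.zero_mul, Matrix.zero_apply]

lemma klk_entry {p q : ℕ} (P : ℕ → Mat d) (Γ : Mat d) (hP0 : P 0 = 0) (hΓs : Γᵀ = Γ)
    (hdet : IsUnit Γ.det) (i j : Fin q) (a b : Fin d) :
    (Kblk P Γ p q * Lblk Γ⁻¹ p * (Kblk P Γ p q)ᵀ) (i, a) (j, b)
      = ∑ t ∈ Finset.range p, (P (t - (i:ℕ)) * Γ * (P (t - (j:ℕ)))ᵀ) a b := by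
  have hKL : ∀ (l : Fin p) (e : Fin d),
      (Kblk P Γ p q * Lblk Γ⁻¹ p) (i, a) (l, e) = (P ((l:ℕ) - (i:ℕ)) * Γ * Γ⁻¹) a e := by
    intro l e
    rw [Matrix.mul_apply, Fintype.sum_prod_type]
    have h1 : ∀ (l' : Fin p) (c : Fin d),
        Kblk P Γ p q (i, a) (l', c) * Lblk Γ⁻¹ p (l', c) (l, e)
          = if l' = l then (P ((l':ℕ) - (i:ℕ)) * Γ) a c * Γ⁻¹ c e else 0 := by
      intro l' c
      rw [kblk_eq P Γ hP0]
      show (P ((l':ℕ) - (i:ℕ)) * Γ) a c * (if l' = l then Γ⁻¹ c e else 0) = _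
      rw [mul_ite, mul_zero]
    simp only [h1, Finset.sum_ite_irrel, Finset.sum_const_zero, Finset.sum_ite_eq',
      Finset.mem_univ, if_true]
    rw [← Matrix.mul_apply]
  rw [Matrix.mul_apply, Fintype.sum_prod_type]
  have h2 : ∀ l : Fin p,
      ∑ e, (Kblk P Γ p q * Lblk Γ⁻¹ p) (i, a) (l, e) * (Kblk P Γ p q)ᵀ (l, e) (j, b)
        = (P ((l:ℕ) - (i:ℕ)) * Γ * (P ((l:ℕ) - (j:ℕ)))ᵀ) a b := by
    intro l
    have h3 : ∀ e, (Kblk P Γ p q * Lblk Γ⁻¹ p) (i, a) (l, e) * (Kblk P Γ p q)ᵀ (l, e) (j, b)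
        = (P ((l:ℕ) - (i:ℕ)) * Γ * Γ⁻¹) a e * (P ((l:ℕ) - (j:ℕ)) * Γ) b e := by
      intro e
      rw [Matrix.transpose_apply, hKL l e, kblk_eq P Γ hP0]
    rw [Finset.sum_congr rfl fun e _ => h3 e]
    have h4 : ∑ e, (P ((l:ℕ) - (i:ℕ)) * Γ * Γ⁻¹) a e * (P ((l:ℕ) - (j:ℕ)) * Γ) b e
        = ((P ((l:ℕ) - (i:ℕ)) * Γ * Γ⁻¹) * ((P ((l:ℕ) - (j:ℕ)) * Γ))ᵀ) a b := by
      rw [Matrix.mul_apply]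
      exact Finset.sum_congr rfl fun e _ => by rw [Matrix.transpose_apply]
    rw [h4]
    have h5 : (P ((l:ℕ) - (i:ℕ)) * Γ * Γ⁻¹) * ((P ((l:ℕ) - (j:ℕ)) * Γ))ᵀ
        = P ((l:ℕ) - (i:ℕ)) * Γ * (P ((l:ℕ) - (j:ℕ)))ᵀ := by
      rw [Matrix.transpose_mul, hΓs]
      simp only [Matrix.mul_assoc]
      rw [Matrix.nonsing_inv_mul_cancel_left _ _ hdet]
    rw [h5]
  rw [Finset.sum_congr rfl fun l _ => h2 l]
  exact Fin.sum_univ_eq_sum_range (fun t => (P (t - (i:ℕ)) * Γ * (P (t - (j:ℕ)))ᵀ) a b) p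

lemma schurS_entry {p q : ℕ} (P : ℕ → Mat d) (Γ : Mat d) (hP0 : P 0 = 0) (hΓs : Γᵀ = Γ)
    (hdet : IsUnit Γ.det)
    (hsm : ∀ i j : ℕ, ∀ a b : Fin d, Summable (fun t : ℕ => (P (t - i) * Γ * (P (t - j))ᵀ) a b))
    (i j : Fin q) (a b : Fin d) :
    SchurS P Γ p q (i, a) (j, b)
      = ∑' m : ℕ, (P ((m + p) - (i:ℕ)) * Γ * (P ((m + p) - (j:ℕ)))ᵀ) a b := by
  have hLinv : (Lblk Γ p)⁻¹ = Lblk Γ⁻¹ p := Matrix.inv_eq_right_inv (lblk_mul Γ hdet)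
  show Hblk P Γ q (i,a) (j,b)
      - (Kblk P Γ p q * (Lblk Γ p)⁻¹ * (Kblk P Γ p q)ᵀ) (i,a) (j,b) = _
  rw [hLinv, hblk_entry P Γ hP0 hΓs hsm i j a b, klk_entry P Γ hP0 hΓs hdet i j a b,
    ← (hsm i j a b).sum_add_tsum_nat_add p, add_sub_cancel_left]

def Cmx {q : ℕ} (P : ℕ → Mat d) (t : ℕ) : Matrix (Fin q × Fin d) (Fin d) ℝ :=
  fun ia e => P (t - (ia.1 : ℕ)) ia.2 e

lemma cmx_triple {q : ℕ} (P : ℕ → Mat d) (Γ : Mat d) (t : ℕ) (ia jb : Fin q × Fin d) :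
    ((Cmx P t : Matrix (Fin q × Fin d) (Fin d) ℝ) * Γ * (Cmx P t)ᵀ) ia jb
      = (P (t - (ia.1:ℕ)) * Γ * (P (t - (jb.1:ℕ)))ᵀ) ia.2 jb.2 := by
  rw [triple_apply, triple_apply]
  rfl

lemma quad_form {p q : ℕ} (P : ℕ → Mat d) (Γ : Mat d) (hP0 : P 0 = 0) (hΓs : Γᵀ = Γ)
    (hdet : IsUnit Γ.det)
    (hsm : ∀ i j : ℕ, ∀ a b : Fin d, Summable (fun t : ℕ => (P (t - i) * Γ * (P (t - j))ᵀ) a b))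
    (x : Fin q × Fin d → ℝ) :
    x ⬝ᵥ (SchurS P Γ p q).mulVec x
        = ∑' m : ℕ, (Matrix.vecMul x (Cmx P (m + p))) ⬝ᵥ
            Γ.mulVec (Matrix.vecMul x (Cmx P (m + p)))
      ∧ Summable (fun m : ℕ => (Matrix.vecMul x (Cmx P (m + p))) ⬝ᵥ
            Γ.mulVec (Matrix.vecMul x (Cmx P (m + p)))) := by
  have hsmM : ∀ ia jb : Fin q × Fin d,
      Summable fun m : ℕ => ((Cmx P (m + p) : Matrix (Fin q × Fin d) (Fin d) ℝ) * Γ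
        * (Cmx P (m + p))ᵀ) ia jb := by
    intro ia jb
    have h0 := (hsm ia.1 jb.1 ia.2 jb.2).comp_injective (add_left_injective p)
    have heq : ((fun t : ℕ => (P (t - (ia.1:ℕ)) * Γ * (P (t - (jb.1:ℕ)))ᵀ) ia.2 jb.2)
        ∘ fun m => m + p)
        = fun m => ((Cmx P (m + p) : Matrix (Fin q × Fin d) (Fin d) ℝ) * Γ
          * (Cmx P (m + p))ᵀ) ia jb := by
      funext m
      rw [Function.comp_apply, cmx_triple]
    rw [heq] at h0
    exact h0
  have hSent : ∀ ia jb : Fin q × Fin d, SchurS P Γ p q ia jb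
      = ∑' m : ℕ, ((Cmx P (m + p) : Matrix (Fin q × Fin d) (Fin d) ℝ) * Γ
        * (Cmx P (m + p))ᵀ) ia jb := by
    intro ia jb
    rw [show ia = (ia.1, ia.2) from rfl, show jb = (jb.1, jb.2) from rfl,
      schurS_entry P Γ hP0 hΓs hdet hsm ia.1 jb.1 ia.2 jb.2]
    exact tsum_congr fun m => (cmx_triple P Γ (m+p) (ia.1, ia.2) (jb.1, jb.2)).symm
  have hsum2 : ∀ ia : Fin q × Fin d, Summable fun m : ℕ =>
      ∑ jb, ((Cmx P (m + p) : Matrix (Fin q × Fin d) (Fin d) ℝ) * Γ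
        * (Cmx P (m + p))ᵀ) ia jb * x jb :=
    fun ia => summable_sum fun jb _ => (hsmM ia jb).mul_right (x jb)
  have hsum3 : Summable fun m : ℕ =>
      ∑ ia, x ia * ∑ jb, ((Cmx P (m + p) : Matrix (Fin q × Fin d) (Fin d) ℝ) * Γ
        * (Cmx P (m + p))ᵀ) ia jb * x jb :=
    summable_sum fun ia _ => (hsum2 ia).mul_left (x ia)
  have hterm2 : ∀ m : ℕ,
      ∑ ia, x ia * ∑ jb, ((Cmx P (m + p) : Matrix (Fin q × Fin d) (Fin d) ℝ) * Γ
        * (Cmx P (m + p))ᵀ) ia jb * x jb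
        = (Matrix.vecMul x (Cmx P (m + p))) ⬝ᵥ Γ.mulVec (Matrix.vecMul x (Cmx P (m + p))) := by
    intro m
    have h1 : ∑ ia, x ia * ∑ jb, ((Cmx P (m + p) : Matrix (Fin q × Fin d) (Fin d) ℝ) * Γ
        * (Cmx P (m + p))ᵀ) ia jb * x jb
        = x ⬝ᵥ ((Cmx P (m + p) : Matrix (Fin q × Fin d) (Fin d) ℝ) * Γ
          * (Cmx P (m + p))ᵀ).mulVec x := rfl
    rw [h1, ← Matrix.mulVec_mulVec, ← Matrix.mulVec_mulVec, Matrix.dotProduct_mulVec,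
      Matrix.mulVec_transpose]
  have hmain : x ⬝ᵥ (SchurS P Γ p q).mulVec x
      = ∑' m : ℕ, ∑ ia, x ia * ∑ jb, ((Cmx P (m + p) : Matrix (Fin q × Fin d) (Fin d) ℝ) * Γ
        * (Cmx P (m + p))ᵀ) ia jb * x jb := by
    have h1 : x ⬝ᵥ (SchurS P Γ p q).mulVec x
        = ∑ ia, x ia * ∑ jb, SchurS P Γ p q ia jb * x jb := rfl
    rw [h1]
    have h2 : ∀ ia : Fin q × Fin d, ∑ jb, SchurS P Γ p q ia jb * x jb
        = ∑' m : ℕ, ∑ jb, ((Cmx P (m + p) : Matrix (Fin q × Fin d) (Fin d) ℝ) * Γ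
          * (Cmx P (m + p))ᵀ) ia jb * x jb := by
      intro ia
      rw [Finset.sum_congr rfl fun jb _ => by rw [hSent ia jb, ← tsum_mul_right]]
      exact (Summable.tsum_finsetSum fun jb _ => (hsmM ia jb).mul_right (x jb)).symm
    rw [Finset.sum_congr rfl fun ia _ => by rw [h2 ia, ← tsum_mul_left]]
    exact (Summable.tsum_finsetSum fun ia _ => (hsum2 ia).mul_left (x ia)).symm
  constructor
  · rw [hmain]
    exact tsum_congr hterm2
  · have heq : (fun m : ℕ => ∑ ia, x ia * ∑ jb,
        ((Cmx P (m + p) : Matrix (Fin q × Fin d) (Fin d) ℝ) * Γ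
          * (Cmx P (m + p))ᵀ) ia jb * x jb)
        = fun m => (Matrix.vecMul x (Cmx P (m + p))) ⬝ᵥ
            Γ.mulVec (Matrix.vecMul x (Cmx P (m + p))) := funext hterm2
    exact heq ▸ hsum3

lemma schurS_det_ne {p q : ℕ} (P : ℕ → Mat d) (Γ : Mat d) (hP0 : P 0 = 0) (hΓs : Γᵀ = Γ)
    (hΓ : Γ.PosDef)
    (hsm : ∀ i j : ℕ, ∀ a b : Fin d, Summable (fun t : ℕ => (P (t - i) * Γ * (P (t - j))ᵀ) a b))
    (hA2 : (PiMat P p q).det ≠ 0) :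
    (SchurS P Γ p q).det ≠ 0 := by
  have hdet : IsUnit Γ.det := isUnit_iff_ne_zero.mpr (ne_of_gt hΓ.det_pos)
  intro hdet0
  obtain ⟨v, hv0, hv⟩ := Matrix.exists_mulVec_eq_zero_iff.mpr hdet0
  obtain ⟨hqf, hsumq⟩ := quad_form P Γ hP0 hΓs hdet hsm v
  have h0 : v ⬝ᵥ (SchurS P Γ p q).mulVec v = 0 := by rw [hv, dotProduct_zero]
  have hnn : ∀ m : ℕ, 0 ≤ (Matrix.vecMul v (Cmx P (m + p))) ⬝ᵥ
      Γ.mulVec (Matrix.vecMul v (Cmx P (m + p))) := by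
    intro m
    have hps := hΓ.posSemidef.dotProduct_mulVec_nonneg (Matrix.vecMul v (Cmx P (m + p)))
    simpa using hps
  have hvpi : Matrix.vecMul v (PiMat P p q) ≠ 0 := by
    intro hvz
    exact hA2 (Matrix.exists_vecMul_eq_zero_iff.mp ⟨v, hv0, hvz⟩)
  obtain ⟨me, hme⟩ := Function.ne_iff.mp hvpi
  have hrel : Matrix.vecMul v (PiMat P p q) me
      = Matrix.vecMul v (Cmx P ((me.1:ℕ) + p)) me.2 := by
    show ∑ ia, v ia * PiMat P p q ia me = ∑ ia, v ia * Cmx P ((me.1:ℕ) + p) ia me.2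
    refine Finset.sum_congr rfl fun ia _ => ?_
    show v ia * P (p + (me.1:ℕ) - (ia.1:ℕ)) ia.2 me.2
        = v ia * P ((me.1:ℕ) + p - (ia.1:ℕ)) ia.2 me.2
    have hidx : p + (me.1:ℕ) - (ia.1:ℕ) = (me.1:ℕ) + p - (ia.1:ℕ) := by omega
    rw [hidx]
  have hune : Matrix.vecMul v (Cmx P ((me.1:ℕ) + p)) ≠ 0 := by
    intro hz
    apply hme
    rw [hrel, hz]
    rfl
  have hpos : 0 < (Matrix.vecMul v (Cmx P ((me.1:ℕ) + p))) ⬝ᵥ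
      Γ.mulVec (Matrix.vecMul v (Cmx P ((me.1:ℕ) + p))) := by
    have hpd := hΓ.dotProduct_mulVec_pos hune
    simpa using hpd
  have hlt := hsumq.tsum_pos hnn (me.1:ℕ) hpos
  rw [← hqf, h0] at hlt
  exact lt_irrefl 0 hlt

lemma main_det {p q : ℕ} (A B P : ℕ → Mat d)
    (hA : ∀ k, k = 0 ∨ p < k → A k = 0)
    (hP : IsPSeq A B q P) (hA1 : Causal B q)
    (hA2 : (PiMat P p q).det ≠ 0) (Γ : Mat d) (hΓ : Γ.PosDef) :
    (SchurS P Γ p q).det ≠ 0 := by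
  obtain ⟨C, hC, r, hr, hr1, hbd⟩ := exists_coeff_bound A B P hA hP hA1
  have hΓs : Γᵀ = Γ := by
    have h1 := hΓ.1
    exact (by simpa using h1 : Γ.IsSymm).eq
  exact schurS_det_ne P Γ hP.1 hΓs hΓ
    (fun i j a b => summable_entry P Γ hC hr hr1 hbd i j a b) hA2

end SchurAux

/-- Under causality (A₁) and strong controllability (A₂), the Schur
complement `S = H - K L⁻¹ Kᵗ` of `L` in `Λ` and `Λ` itself are invertible, and `Λ⁻¹`
is the indicated block matrix. -/
theorem schur_complement_invertible
    (d p q : ℕ) (hd : 0 < d) (hp : 0 < p) (hq : 0 < q)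
    (A B P : ℕ → Mat d)
    (hA : ∀ k, k = 0 ∨ p < k → A k = 0) (hB : ∀ k, k = 0 ∨ q < k → B k = 0)
    (hP : IsPSeq A B q P)
    (hA1 : Causal B q)
    (hA2 : (PiMat P p q).det ≠ 0)
    (Γ : Mat d) (hΓ : Γ.PosDef) :
    (SchurS P Γ p q).det ≠ 0 ∧ (Lam P Γ p q).det ≠ 0 ∧
      (Lam P Γ p q)⁻¹ = Matrix.fromBlocks
        ((Lblk Γ p)⁻¹ + (Lblk Γ p)⁻¹ * (Kblk P Γ p q)ᵀ * (SchurS P Γ p q)⁻¹ *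
          Kblk P Γ p q * (Lblk Γ p)⁻¹)
        (-((Lblk Γ p)⁻¹ * (Kblk P Γ p q)ᵀ * (SchurS P Γ p q)⁻¹))
        (-((SchurS P Γ p q)⁻¹ * Kblk P Γ p q * (Lblk Γ p)⁻¹))
        ((SchurS P Γ p q)⁻¹) := by
  have hSdet : (SchurS P Γ p q).det ≠ 0 :=
    SchurAux.main_det A B P (fun k hk => hA k hk) hP hA1 hA2 Γ hΓ
  have hΓdet : IsUnit Γ.det := isUnit_iff_ne_zero.mpr (ne_of_gt hΓ.det_pos)
  have hLmul : Lblk Γ p * Lblk Γ⁻¹ p = 1 := SchurAux.lblk_mul Γ hΓdet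
  have hLdet : (Lblk Γ p).det ≠ 0 := Matrix.det_ne_zero_of_right_inverse hLmul
  haveI iL : Invertible (Lblk Γ p) :=
    (Lblk Γ p).invertibleOfIsUnitDet (isUnit_iff_ne_zero.mpr hLdet)
  have hLinvOf : ⅟(Lblk Γ p) = (Lblk Γ p)⁻¹ := Matrix.invOf_eq_nonsing_inv _
  have hSalt : Hblk P Γ q - Kblk P Γ p q * ⅟(Lblk Γ p) * (Kblk P Γ p q)ᵀ
      = SchurS P Γ p q := by
    rw [hLinvOf]; rfl
  haveI iS : Invertible (Hblk P Γ q - Kblk P Γ p q * ⅟(Lblk Γ p) * (Kblk P Γ p q)ᵀ) := by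
    rw [hSalt]
    exact (SchurS P Γ p q).invertibleOfIsUnitDet (isUnit_iff_ne_zero.mpr hSdet)
  refine ⟨hSdet, ?_, ?_⟩
  · have hdetEq :=
      Matrix.det_fromBlocks₁₁ (Lblk Γ p) (Kblk P Γ p q)ᵀ (Kblk P Γ p q) (Hblk P Γ q)
    rw [hSalt] at hdetEq
    show (Matrix.fromBlocks (Lblk Γ p) (Kblk P Γ p q)ᵀ (Kblk P Γ p q) (Hblk P Γ q)).det ≠ 0
    rw [hdetEq]
    exact mul_ne_zero hLdet hSdet
  · haveI iLam : Invertible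
        (Matrix.fromBlocks (Lblk Γ p) (Kblk P Γ p q)ᵀ (Kblk P Γ p q) (Hblk P Γ q)) :=
      Matrix.fromBlocks₁₁Invertible _ _ _ _
    have h1 : (Lam P Γ p q)⁻¹
        = ⅟(Matrix.fromBlocks (Lblk Γ p) (Kblk P Γ p q)ᵀ (Kblk P Γ p q) (Hblk P Γ q)) :=
      (Matrix.invOf_eq_nonsing_inv
        (Matrix.fromBlocks (Lblk Γ p) (Kblk P Γ p q)ᵀ (Kblk P Γ p q) (Hblk P Γ q))).symm
    rw [h1, Matrix.invOf_fromBlocks₁₁_eq]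
    have hSinvOf : ⅟(Hblk P Γ q - Kblk P Γ p q * ⅟(Lblk Γ p) * (Kblk P Γ p q)ᵀ)
        = (SchurS P Γ p q)⁻¹ := by
      rw [Matrix.invOf_eq_nonsing_inv, hSalt]
    rw [hSinvOf, hLinvOf]


end
end

section
/- Assume (A₁). Then for all 1 ≤ i, j ≤ q, the (i,j) d×d block of the Schur complement S = H − K L⁻¹ Kᵗ equals Σ_{ℓ=1}^∞ P_{p−i+ℓ} Γ P_{p−j+ℓ}ᵗ (the series converging absolutely). In particular, S is positive semidefinite. -/
open MeasureTheory ProbabilityTheory Filter Matrix Finset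
open scoped Topology Kronecker

noncomputable section

variable {Ω : Type*}

namespace SchurAux

open Polynomial PowerSeries Finset


/-- coefficientwise ℓ¹ for a complex power series -/
def SummCoeff (f : PowerSeries ℂ) : Prop := Summable fun k => ‖PowerSeries.coeff k f‖

lemma summCoeff_mul {f g : PowerSeries ℂ} (hf : SummCoeff f) (hg : SummCoeff g) :
    SummCoeff (f * g) := by
  have h := summable_norm_sum_mul_antidiagonal_of_summable_norm hf hg
  simpa [SummCoeff, PowerSeries.coeff_mul] using h

lemma summCoeff_poly (h : Polynomial ℂ) : SummCoeff (h : PowerSeries ℂ) := by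
  apply summable_of_ne_finset_zero (s := Finset.range (h.natDegree + 1))
  intro n hn
  have : h.natDegree < n := by simpa using Finset.mem_range.not.1 hn
  simp [Polynomial.coeff_coe, Polynomial.coeff_eq_zero_of_natDegree_lt this]

lemma summCoeff_C (x : ℂ) : SummCoeff (PowerSeries.C x) := by
  simpa using summCoeff_poly (Polynomial.C x)

lemma summCoeff_neg {f : PowerSeries ℂ} (hf : SummCoeff f) : SummCoeff (-f) := by
  simpa [SummCoeff] using hf

lemma summCoeff_invUnitsSub {r : ℂ} (hr0 : r ≠ 0) (hr : 1 < ‖r‖) :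
    SummCoeff (PowerSeries.invUnitsSub (Units.mk0 r hr0)) := by
  have hlt : ‖r‖⁻¹ < 1 := by
    rw [inv_lt_one_iff₀]; right; exact hr
  have hs : Summable fun n : ℕ => ‖r‖⁻¹ * ‖r‖⁻¹ ^ n :=
    (summable_geometric_of_lt_one (by positivity) hlt).mul_left _
  apply hs.congr
  intro n
  simp only [PowerSeries.coeff_invUnitsSub, one_divp]
  have : ((Units.mk0 r hr0)⁻¹ : ℂˣ) = (r⁻¹ : ℂ) := rfl
  rw [← inv_pow, Units.val_pow_eq_pow_val, this, norm_pow, norm_inv, pow_succ]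
  ring

lemma exists_inv_multiset (s : Multiset ℂ) (hs : ∀ r ∈ s, 1 < ‖r‖) :
    ∃ u : PowerSeries ℂ,
      (s.map fun r => PowerSeries.X - PowerSeries.C r).prod * u = 1 ∧ SummCoeff u := by
  induction s using Multiset.induction_on with
  | empty => exact ⟨1, by simp, by simpa using summCoeff_poly 1⟩
  | cons r s ih =>
    obtain ⟨u, hu, hsu⟩ := ih fun x hx => hs x (Multiset.mem_cons_of_mem hx)
    have hr : 1 < ‖r‖ := hs r (Multiset.mem_cons_self r s)
    have hr0 : r ≠ 0 := by rintro rfl; norm_num at hr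
    set v : ℂˣ := Units.mk0 r hr0 with hv
    have h1 : (PowerSeries.X - PowerSeries.C r) * (-(PowerSeries.invUnitsSub v)) = 1 := by
      have h2 := PowerSeries.invUnitsSub_mul_sub v
      have hvr : ((v : ℂ)) = r := rfl
      rw [hvr] at h2
      linear_combination h2
    refine ⟨u * (-(PowerSeries.invUnitsSub v)), ?_, summCoeff_mul hsu
      (summCoeff_neg (summCoeff_invUnitsSub hr0 hr))⟩
    rw [Multiset.map_cons, Multiset.prod_cons]
    have : (PowerSeries.X - PowerSeries.C r) *
        (Multiset.map (fun r => PowerSeries.X - PowerSeries.C r) s).prod *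
        (u * -(PowerSeries.invUnitsSub v)) =
        ((PowerSeries.X - PowerSeries.C r) * (-(PowerSeries.invUnitsSub v))) *
        ((Multiset.map (fun r => PowerSeries.X - PowerSeries.C r) s).prod * u) := by ring
    rw [this, h1, hu, one_mul]

lemma summCoeff_of_poly_mul_eq (g h : Polynomial ℂ)
    (hg : ∀ z : ℂ, ‖z‖ ≤ 1 → g.eval z ≠ 0) (c : PowerSeries ℂ)
    (hc : (g : PowerSeries ℂ) * c = (h : PowerSeries ℂ)) : SummCoeff c := by
  have hg0 : g ≠ 0 := fun h0 => hg 0 (by simp) (by simp [h0])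
  have hroots : ∀ r ∈ g.roots, 1 < ‖r‖ := by
    intro r hr
    by_contra hle
    exact hg r (le_of_not_gt hle) ((Polynomial.mem_roots hg0).1 hr)
  have hfact := (IsAlgClosed.splits g).eq_prod_roots
  obtain ⟨u, hu, hsu⟩ := exists_inv_multiset g.roots hroots
  have hlead : g.leadingCoeff ≠ 0 := Polynomial.leadingCoeff_ne_zero.2 hg0
  have hgps : (g : PowerSeries ℂ) = PowerSeries.C g.leadingCoeff *
      (g.roots.map fun r => PowerSeries.X - PowerSeries.C r).prod := by
    conv_lhs => rw [hfact]
    push_cast [Polynomial.coe_mul, Polynomial.coe_C]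
    rw [show ((((g.roots.map fun a => Polynomial.X - Polynomial.C a).prod : Polynomial ℂ)) :
        PowerSeries ℂ) = Polynomial.coeToPowerSeries.ringHom
        (g.roots.map fun a => Polynomial.X - Polynomial.C a).prod from rfl,
      map_multiset_prod, Multiset.map_map]
    refine congrArg _ (congrArg Multiset.prod (Multiset.map_congr rfl ?_))
    intro a _
    simp [Polynomial.coeToPowerSeries.ringHom_apply, Polynomial.coe_sub, Polynomial.coe_X,
      Polynomial.coe_C, Function.comp]
  set w := PowerSeries.C g.leadingCoeff⁻¹ * u with hw
  have hinv : (g : PowerSeries ℂ) * w = 1 := by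
    rw [hgps, hw]
    have : PowerSeries.C g.leadingCoeff *
        (g.roots.map fun r => PowerSeries.X - PowerSeries.C r).prod *
        (PowerSeries.C g.leadingCoeff⁻¹ * u) =
        (PowerSeries.C g.leadingCoeff * PowerSeries.C g.leadingCoeff⁻¹) *
        ((g.roots.map fun r => PowerSeries.X - PowerSeries.C r).prod * u) := by ring
    rw [this, hu, mul_one, ← _root_.map_mul (PowerSeries.C), mul_inv_cancel₀ hlead, _root_.map_one]
  have hc' : c = w * (h : PowerSeries ℂ) := by
    calc c = ((g : PowerSeries ℂ) * w) * c := by rw [hinv, one_mul]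
    _ = w * ((g : PowerSeries ℂ) * c) := by ring
    _ = w * (h : PowerSeries ℂ) := by rw [hc]
  rw [hc']
  exact summCoeff_mul (summCoeff_mul (summCoeff_C _) hsu) (summCoeff_poly h)

end SchurAux


namespace SchurAux

open Polynomial PowerSeries Finset

lemma sum_Icc_one {M : Type*} [AddCommMonoid M] (n : ℕ) (f : ℕ → M) :
    ∑ i ∈ Finset.Icc 1 n, f i = ∑ i ∈ Finset.range n, f (1 + i) := by
  rw [← Finset.Ico_add_one_right_eq_Icc, Finset.sum_Ico_eq_sum_range]
  simp

theorem psum_summable {d : ℕ} (p q : ℕ) (A B P : ℕ → Mat d)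
    (hA : ∀ k, k = 0 ∨ p < k → A k = 0) (hB : ∀ k, k = 0 ∨ q < k → B k = 0)
    (hP : IsPSeq A B q P) (hA1 : Causal B q) (a b : Fin d) :
    Summable fun k => |P k a b| := by
  classical
  set ρ : Matrix (Fin d) (Fin d) ℝ →+* Matrix (Fin d) (Fin d) ℂ :=
    (algebraMap ℝ ℂ).mapMatrix with hρ
  set Pc : ℕ → Matrix (Fin d) (Fin d) ℂ := fun k => ρ (P k) with hPc
  set Aco : ℕ → Matrix (Fin d) (Fin d) ℂ := fun k => ρ (A k) with hAco
  set Bco : ℕ → Matrix (Fin d) (Fin d) ℂ := fun k => if k = 0 then 1 else ρ (B k) with hBco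
  have hPc0 : Pc 0 = 0 := by simp [hPc, hP.1]
  have hA0 : Aco 0 = 0 := by simp [hAco, hA 0 (Or.inl rfl)]
  have hBz : ∀ k, q < k → Bco k = 0 := by
    intro k hk
    have hk0 : k ≠ 0 := by omega
    simp [hBco, hk0, hB k (Or.inr hk)]
  have hconv : ∀ k, ∑ ij ∈ Finset.HasAntidiagonal.antidiagonal k, Bco ij.1 * Pc ij.2 = -(Aco k) := by
    intro k
    rcases Nat.eq_zero_or_pos k with rfl | hk
    · simp [hPc0, hA0]
    · have hPkc : Pc k + ∑ j ∈ Finset.Icc 1 q, Bco j * Pc (k - j) = -(Aco k) := by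
        have h0 := congrArg ρ (hP.2 k hk)
        simp only [map_add, map_sum, _root_.map_mul, map_neg] at h0
        rw [← h0]
        congr 1
        apply Finset.sum_congr rfl
        intro j hj
        have hj0 : j ≠ 0 := by have := (Finset.mem_Icc.1 hj).1; omega
        simp [hBco, hj0, hPc, hAco]
      rw [Finset.Nat.sum_antidiagonal_eq_sum_range_succ_mk, Finset.sum_range_succ']
      have h0 : Bco 0 * Pc (k - 0) = Pc k := by simp [hBco]
      rw [h0, ← hPkc, add_comm]
      congr 1
      have e1 : ∑ i ∈ Finset.range k, Bco (i + 1) * Pc (k - (i + 1)) =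
          ∑ j ∈ Finset.Icc 1 k, Bco j * Pc (k - j) := by
        rw [sum_Icc_one]
        apply Finset.sum_congr rfl
        intro i _
        rw [add_comm 1 i]
      have e2 : ∑ j ∈ Finset.Icc 1 k, Bco j * Pc (k - j) =
          ∑ j ∈ Finset.Icc 1 (max k q), Bco j * Pc (k - j) := by
        apply Finset.sum_subset (Finset.Icc_subset_Icc_right (le_max_left _ _))
        intro j hj hnj
        simp only [Finset.mem_Icc] at hj hnj
        have : k - j = 0 := by omega
        rw [this, hPc0, mul_zero]
      have e3 : ∑ j ∈ Finset.Icc 1 q, Bco j * Pc (k - j) =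
          ∑ j ∈ Finset.Icc 1 (max k q), Bco j * Pc (k - j) := by
        apply Finset.sum_subset (Finset.Icc_subset_Icc_right (le_max_right _ _))
        intro j hj hnj
        simp only [Finset.mem_Icc] at hj hnj
        rw [hBz j (by omega), zero_mul]
      rw [e1, e2, e3]
  -- polynomial matrices
  set Bpol : Matrix (Fin d) (Fin d) (Polynomial ℂ) :=
    Matrix.of fun x y => ∑ n ∈ Finset.range (q + 1), Polynomial.C (Bco n x y) * Polynomial.X ^ n
    with hBpol
  set Apol : Matrix (Fin d) (Fin d) (Polynomial ℂ) :=
    Matrix.of fun x y => ∑ n ∈ Finset.range (p + 1), Polynomial.C (Aco n x y) * Polynomial.X ^ n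
    with hApol
  have hcoB : ∀ x y n, (Bpol x y).coeff n = Bco n x y := by
    intro x y n
    simp only [hBpol, Matrix.of_apply, Polynomial.finset_sum_coeff, Polynomial.coeff_C_mul,
      Polynomial.coeff_X_pow, mul_ite, mul_one, mul_zero]
    rw [Finset.sum_ite_eq]
    by_cases hn : n ∈ Finset.range (q + 1)
    · rw [if_pos hn]
    · rw [if_neg hn]
      have hnq : q < n := by simpa using hn
      rw [hBz n hnq]
      simp
  have hcoA : ∀ x y n, (Apol x y).coeff n = Aco n x y := by
    intro x y n
    simp only [hApol, Matrix.of_apply, Polynomial.finset_sum_coeff, Polynomial.coeff_C_mul,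
      Polynomial.coeff_X_pow, mul_ite, mul_one, mul_zero]
    rw [Finset.sum_ite_eq]
    by_cases hn : n ∈ Finset.range (p + 1)
    · rw [if_pos hn]
    · rw [if_neg hn]
      have hnp : p < n := by simpa using hn
      rw [show Aco n = 0 from by simp [hAco, hA n (Or.inr hnp)]]
      simp
  set ψ : Polynomial ℂ →+* PowerSeries ℂ := Polynomial.coeToPowerSeries.ringHom with hψ
  set Bmat := ψ.mapMatrix Bpol with hBmat
  set Amat := ψ.mapMatrix Apol with hAmat
  set Pmat : Matrix (Fin d) (Fin d) (PowerSeries ℂ) :=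
    Matrix.of fun x y => PowerSeries.mk fun k => Pc k x y with hPmat
  have hcoeff_B : ∀ x y n, PowerSeries.coeff n (Bmat x y) = Bco n x y := by
    intro x y n
    rw [hBmat, RingHom.mapMatrix_apply, Matrix.map_apply, hψ,
      Polynomial.coeToPowerSeries.ringHom_apply, Polynomial.coeff_coe, hcoB]
  have hcoeff_A : ∀ x y n, PowerSeries.coeff n (Amat x y) = Aco n x y := by
    intro x y n
    rw [hAmat, RingHom.mapMatrix_apply, Matrix.map_apply, hψ,
      Polynomial.coeToPowerSeries.ringHom_apply, Polynomial.coeff_coe, hcoA]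
  have hBP : Bmat * Pmat = -Amat := by
    ext x y k
    rw [Matrix.mul_apply]
    calc PowerSeries.coeff k (∑ c, Bmat x c * Pmat c y)
        = ∑ c, PowerSeries.coeff k (Bmat x c * Pmat c y) := map_sum _ _ _
      _ = ∑ c, ∑ ij ∈ Finset.HasAntidiagonal.antidiagonal k, Bco ij.1 x c * Pc ij.2 c y := by
          apply Finset.sum_congr rfl
          intro c _
          rw [PowerSeries.coeff_mul]
          apply Finset.sum_congr rfl
          intro ij _
          rw [hcoeff_B, hPmat]
          simp [PowerSeries.coeff_mk]
      _ = ∑ ij ∈ Finset.HasAntidiagonal.antidiagonal k, ∑ c, Bco ij.1 x c * Pc ij.2 c y := Finset.sum_comm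
      _ = ∑ ij ∈ Finset.HasAntidiagonal.antidiagonal k, (Bco ij.1 * Pc ij.2) x y := by
          apply Finset.sum_congr rfl
          intro ij _
          rw [Matrix.mul_apply]
      _ = (∑ ij ∈ Finset.HasAntidiagonal.antidiagonal k, Bco ij.1 * Pc ij.2) x y := by
          rw [Matrix.sum_apply]
      _ = (-(Aco k)) x y := by rw [hconv k]
      _ = PowerSeries.coeff k ((-Amat) x y) := by
          rw [Matrix.neg_apply, Matrix.neg_apply, map_neg, hcoeff_A]
  have hdet : ∀ x y, ((Bpol.det : Polynomial ℂ) : PowerSeries ℂ) * Pmat x y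
      = (((Bpol.adjugate * (-Apol)) x y : Polynomial ℂ) : PowerSeries ℂ) := by
    intro x y
    have h2 : Bmat.adjugate * (Bmat * Pmat) = Bmat.det • Pmat := by
      rw [← Matrix.mul_assoc, Matrix.adjugate_mul, Matrix.smul_mul, Matrix.one_mul]
    rw [hBP] at h2
    have h3 : ψ.mapMatrix (Bpol.adjugate * (-Apol)) = Bmat.det • Pmat := by
      rw [_root_.map_mul, map_neg, RingHom.map_adjugate, ← hBmat, ← hAmat]
      exact h2
    have h4 : ψ ((Bpol.adjugate * (-Apol)) x y) = Bmat.det * Pmat x y := by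
      have h5 := congrArg (fun M => M x y) h3
      simpa [RingHom.mapMatrix_apply, Matrix.map_apply, Matrix.smul_apply, smul_eq_mul] using h5
    rw [hψ, Polynomial.coeToPowerSeries.ringHom_apply] at h4
    have h5 : Bmat.det = ((Bpol.det : Polynomial ℂ) : PowerSeries ℂ) := by
      rw [hBmat, ← RingHom.map_det, hψ, Polynomial.coeToPowerSeries.ringHom_apply]
    rw [h4, h5]
  have heval : ∀ z : ℂ, ‖z‖ ≤ 1 → Polynomial.eval z Bpol.det ≠ 0 := by
    intro z hz
    have hmap : (Polynomial.evalRingHom z).mapMatrix Bpol = Bpoly B q z := by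
      ext x y
      simp only [RingHom.mapMatrix_apply, Matrix.map_apply, hBpol, Matrix.of_apply,
        Polynomial.coe_evalRingHom, Polynomial.eval_finset_sum, Polynomial.eval_mul,
        Polynomial.eval_pow, Polynomial.eval_C, Polynomial.eval_X]
      rw [Finset.sum_range_succ']
      unfold Bpoly
      rw [Matrix.add_apply, Matrix.sum_apply, sum_Icc_one]
      have hterm : ∀ i, i ∈ Finset.range q →
          Bco (i + 1) x y * z ^ (i + 1) = (z ^ (1 + i) • (B (1 + i)).map (fun r => (r : ℂ))) x y := by
        intro i _
        rw [add_comm 1 i]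
        simp only [hBco, Nat.succ_ne_zero, if_neg (Nat.succ_ne_zero i), hρ,
          RingHom.mapMatrix_apply, Matrix.map_apply, Matrix.smul_apply, smul_eq_mul]
        rw [mul_comm]
        norm_num [Complex.coe_algebraMap]
      rw [Finset.sum_congr rfl hterm]
      have h0 : Bco 0 x y * z ^ 0 = (1 : Matrix (Fin d) (Fin d) ℂ) x y := by
        simp [hBco]
      rw [h0, add_comm]
    have hd := RingHom.map_det (Polynomial.evalRingHom z) Bpol
    rw [hmap] at hd
    intro h0
    apply hA1 z hz
    rw [← hd]
    exact h0
  have hsc : SummCoeff (Pmat a b) :=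
    summCoeff_of_poly_mul_eq Bpol.det ((Bpol.adjugate * (-Apol)) a b) heval _ (hdet a b)
  apply hsc.congr
  intro k
  simp [hPmat, PowerSeries.coeff_mk, hPc, hρ, RingHom.mapMatrix_apply, Matrix.map_apply,
    Complex.coe_algebraMap, Complex.norm_real, Real.norm_eq_abs]

lemma summable_comp (f : ℕ → ℝ) (hf : Summable fun k => |f k|) (u : ℕ → ℕ) (s t : ℕ)
    (hu : ∀ n, u n = n + s - t) : Summable fun n => |f (u n)| := by
  have h1 : Summable fun n => |f (n - t)| := by
    apply (summable_nat_add_iff t).1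
    simpa using hf
  have h2 : Summable fun n => |f (n + s - t)| := (summable_nat_add_iff s).2 h1
  simpa only [hu] using h2

lemma triple_apply_s1 {d : ℕ} {κ₁ κ₂ : Type*} [Fintype κ₁] [Fintype κ₂]
    (X : Matrix κ₁ (Fin d) ℝ) (G : Mat d) (Y : Matrix κ₂ (Fin d) ℝ) (a : κ₁) (b : κ₂) :
    (X * G * Yᵀ) a b = ∑ e, ∑ c, X a c * G c e * Y b e := by
  simp [Matrix.mul_apply, Matrix.transpose_apply, Finset.sum_mul]

lemma summable_entry_s1 {d : ℕ} (P : ℕ → Mat d) (G : Mat d) (u v : ℕ → ℕ)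
    (hu : ∀ x y : Fin d, Summable fun n => |P (u n) x y|)
    (hv : ∀ x y : Fin d, Summable fun n => |P (v n) x y|) (a b : Fin d) :
    Summable fun n => |(P (u n) * G * (P (v n))ᵀ) a b| := by
  have hb : ∀ c e : Fin d, Summable fun n => |G c e| * (|P (u n) a c| * |P (v n) b e|) := by
    intro c e
    apply Summable.mul_left
    have hM : ∀ n, |P (v n) b e| ≤ ∑' m, |P (v m) b e| :=
      fun n => (hv b e).le_tsum n fun _ _ => abs_nonneg _
    apply Summable.of_nonneg_of_le (fun n => by positivity) (fun n => ?_)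
      ((hu a c).mul_right (∑' m, |P (v m) b e|))
    exact mul_le_mul_of_nonneg_left (hM n) (abs_nonneg _)
  apply Summable.of_nonneg_of_le (fun _ => abs_nonneg _) ?_
    (summable_sum (s := Finset.univ) fun e _ => summable_sum (s := Finset.univ) fun c _ => hb c e)
  intro n
  rw [triple_apply_s1]
  calc |∑ e, ∑ c, P (u n) a c * G c e * P (v n) b e|
      ≤ ∑ e, |∑ c, P (u n) a c * G c e * P (v n) b e| := Finset.abs_sum_le_sum_abs _ _
    _ ≤ ∑ e, ∑ c, |P (u n) a c * G c e * P (v n) b e| := by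
        apply Finset.sum_le_sum
        intro e _
        exact Finset.abs_sum_le_sum_abs _ _
    _ = ∑ e, ∑ c, |G c e| * (|P (u n) a c| * |P (v n) b e|) := by
        apply Finset.sum_congr rfl
        intro e _
        apply Finset.sum_congr rfl
        intro c _
        rw [abs_mul, abs_mul]
        ring

lemma swap_entry {d : ℕ} (X Y G : Mat d) (hG : Gᵀ = G) (a b : Fin d) :
    (X * G * Yᵀ) b a = (Y * G * Xᵀ) a b := by
  have h1 : (Y * G * Xᵀ)ᵀ = X * Gᵀ * Yᵀ := by
    rw [Matrix.transpose_mul, Matrix.transpose_mul, Matrix.transpose_transpose,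
      Matrix.mul_assoc]
  rw [hG] at h1
  rw [← h1, Matrix.transpose_apply]

lemma symm_of_posdef {d : ℕ} {Γ : Mat d} (hΓ : Γ.PosDef) : Γᵀ = Γ := by
  ext x y
  have h := congrFun (congrFun hΓ.1 x) y
  simpa [Matrix.conjTranspose_apply] using h

lemma schur_entry {d : ℕ} (p q : ℕ) (P : ℕ → Mat d) (hP0 : P 0 = 0)
    (hPsum : ∀ x y : Fin d, Summable fun k => |P k x y|)
    (Γ : Mat d) (hΓ : Γ.PosDef) (i j : Fin q) (a b : Fin d) :
    SchurS P Γ p q (i, a) (j, b) =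
      ∑' m : ℕ, (P (p + m - (i : ℕ)) * Γ * (P (p + m - (j : ℕ)))ᵀ) a b := by
  classical
  have hGsym : Γᵀ = Γ := symm_of_posdef hΓ
  have hdetu : IsUnit Γ.det := isUnit_iff_ne_zero.2 hΓ.det_pos.ne'
  have hGinv : Γ * Γ⁻¹ = 1 := Γ.mul_nonsing_inv hdetu
  have hGinv' : Γ⁻¹ * Γ = 1 := Γ.nonsing_inv_mul hdetu
  set T : ℕ → ℝ := fun n => (P (n - (i : ℕ)) * Γ * (P (n - (j : ℕ)))ᵀ) a b with hT
  have hTsum : Summable fun n => |T n| :=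
    summable_entry_s1 P Γ _ _
      (fun x y => summable_comp _ (hPsum x y) _ 0 (i : ℕ) fun n => by omega)
      (fun x y => summable_comp _ (hPsum x y) _ 0 (j : ℕ) fun n => by omega) a b
  have hTzi : ∀ n, n ≤ (i : ℕ) → T n = 0 := by
    intro n hn
    have h0 : n - (i : ℕ) = 0 := by omega
    simp [hT, h0, hP0]
  have hTzj : ∀ n, n ≤ (j : ℕ) → T n = 0 := by
    intro n hn
    have h0 : n - (j : ℕ) = 0 := by omega
    simp [hT, h0, hP0]
  have hH : Hblk P Γ q (i, a) (j, b) = ∑' n, T n := by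
    rcases le_or_gt (i : ℕ) (j : ℕ) with hij | hij
    · have hb : Hblk P Γ q (i, a) (j, b) = Hmat P Γ ((j : ℕ) - (i : ℕ) + 1) a b := by
        simp only [Hblk]
        rw [if_pos hij]
      rw [hb]
      set M : ℕ → Mat d := fun m => P (((j : ℕ) - (i : ℕ) + 1) + m) * Γ * (P (m + 1))ᵀ with hM
      have hMe : ∀ x y : Fin d, Summable fun m => |M m x y| := fun x y =>
        summable_entry_s1 P Γ _ _
          (fun x y => summable_comp _ (hPsum x y) _ ((j : ℕ) - (i : ℕ) + 1) 0 fun n => by omega)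
          (fun x y => summable_comp _ (hPsum x y) _ 1 0 fun n => by omega) x y
      have hMsum : Summable M := by
        apply Pi.summable.2
        intro x
        apply Pi.summable.2
        intro y
        exact (hMe x y).of_abs
      have happ : Hmat P Γ ((j : ℕ) - (i : ℕ) + 1) a b = ∑' m, M m a b := by
        erw [Hmat, tsum_apply hMsum, tsum_apply (Pi.summable.1 hMsum a)]
      rw [happ]
      have hre : ∀ m : ℕ, M m a b = T (m + 1 + (j : ℕ)) := by
        intro m
        simp only [hM, hT]
        rw [show m + 1 + (j : ℕ) - (i : ℕ) = ((j : ℕ) - (i : ℕ) + 1) + m from by omega,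
          show m + 1 + (j : ℕ) - (j : ℕ) = m + 1 from by omega]
      rw [tsum_congr hre]
      apply Function.Injective.tsum_eq (fun m n h => by omega)
      intro n hn
      rcases le_or_gt n (j : ℕ) with h | h
      · exact absurd (hTzj n h) hn
      · exact ⟨n - (j : ℕ) - 1, by show n - (j : ℕ) - 1 + 1 + (j : ℕ) = n; omega⟩
    · have hb : Hblk P Γ q (i, a) (j, b) = Hmat P Γ ((i : ℕ) - (j : ℕ) + 1) b a := by
        simp only [Hblk]
        rw [if_neg (by omega)]
      rw [hb]
      set M : ℕ → Mat d := fun m => P (((i : ℕ) - (j : ℕ) + 1) + m) * Γ * (P (m + 1))ᵀ with hM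
      have hMe : ∀ x y : Fin d, Summable fun m => |M m x y| := fun x y =>
        summable_entry_s1 P Γ _ _
          (fun x y => summable_comp _ (hPsum x y) _ ((i : ℕ) - (j : ℕ) + 1) 0 fun n => by omega)
          (fun x y => summable_comp _ (hPsum x y) _ 1 0 fun n => by omega) x y
      have hMsum : Summable M := by
        apply Pi.summable.2
        intro x
        apply Pi.summable.2
        intro y
        exact (hMe x y).of_abs
      have happ : Hmat P Γ ((i : ℕ) - (j : ℕ) + 1) b a = ∑' m, M m b a := by
        erw [Hmat, tsum_apply hMsum, tsum_apply (Pi.summable.1 hMsum b)]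
      rw [happ]
      have hre : ∀ m : ℕ, M m b a = T (m + 1 + (i : ℕ)) := by
        intro m
        simp only [hM, hT]
        rw [show m + 1 + (i : ℕ) - (i : ℕ) = m + 1 from by omega,
          show m + 1 + (i : ℕ) - (j : ℕ) = ((i : ℕ) - (j : ℕ) + 1) + m from by omega]
        exact swap_entry _ _ _ hGsym a b
      rw [tsum_congr hre]
      apply Function.Injective.tsum_eq (fun m n h => by omega)
      intro n hn
      rcases le_or_gt n (i : ℕ) with h | h
      · exact absurd (hTzi n h) hn
      · exact ⟨n - (i : ℕ) - 1, by show n - (i : ℕ) - 1 + 1 + (i : ℕ) = n; omega⟩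
  have hLinv : (Lblk Γ p)⁻¹ = Lblk Γ⁻¹ p := by
    apply Matrix.inv_eq_right_inv
    ext ⟨k, c⟩ ⟨l, e⟩
    rw [Matrix.mul_apply, Fintype.sum_prod_type]
    simp only [Lblk]
    rw [Finset.sum_eq_single l]
    · by_cases hkl : k = l
      · subst hkl
        simp only [if_pos rfl, if_true]
        rw [← Matrix.mul_apply, hGinv]
        simp [Matrix.one_apply, Prod.ext_iff]
      · simp [hkl, Matrix.one_apply, Prod.ext_iff]
    · intro m _ hm
      simp [hm]
    · intro hl
      exact absurd (Finset.mem_univ l) hl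
  have hK : (Kblk P Γ p q * (Lblk Γ p)⁻¹ * (Kblk P Γ p q)ᵀ) (i, a) (j, b) =
      ∑ n ∈ Finset.range p, T n := by
    rw [hLinv]
    have hKL : ∀ (k : Fin p) (e : Fin d), (Kblk P Γ p q * Lblk Γ⁻¹ p) (i, a) (k, e) =
        if (i : ℕ) < (k : ℕ) then (P ((k : ℕ) - (i : ℕ)) * Γ * Γ⁻¹) a e else 0 := by
      intro k e
      rw [Matrix.mul_apply, Fintype.sum_prod_type]
      simp only [Lblk]
      rw [Finset.sum_eq_single k]
      · by_cases h : (i : ℕ) < (k : ℕ)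
        · simp only [Kblk, if_pos h, if_pos rfl, if_true]
          rw [← Matrix.mul_apply]
        · simp [Kblk, h]
      · intro m _ hm
        simp [hm]
      · intro hl
        exact absurd (Finset.mem_univ k) hl
    rw [Matrix.mul_apply, Fintype.sum_prod_type]
    have hterm : ∀ k : Fin p,
        (∑ e : Fin d, (Kblk P Γ p q * Lblk Γ⁻¹ p) (i, a) (k, e) *
          (Kblk P Γ p q)ᵀ (k, e) (j, b)) = T (k : ℕ) := by
      intro k
      by_cases hik : (i : ℕ) < (k : ℕ)
      · by_cases hjk : (j : ℕ) < (k : ℕ)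
        · have : ∀ e : Fin d, (Kblk P Γ p q * Lblk Γ⁻¹ p) (i, a) (k, e) *
              (Kblk P Γ p q)ᵀ (k, e) (j, b) =
              (P ((k : ℕ) - (i : ℕ)) * Γ * Γ⁻¹) a e * (P ((k : ℕ) - (j : ℕ)) * Γ) b e := by
            intro e
            rw [hKL, if_pos hik, Matrix.transpose_apply]
            simp only [Kblk, if_pos hjk]
          rw [Finset.sum_congr rfl fun e _ => this e]
          have h2 : (∑ e : Fin d, (P ((k : ℕ) - (i : ℕ)) * Γ * Γ⁻¹) a e *
              (P ((k : ℕ) - (j : ℕ)) * Γ) b e) =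
              ((P ((k : ℕ) - (i : ℕ)) * Γ * Γ⁻¹) * ((P ((k : ℕ) - (j : ℕ)) * Γ))ᵀ) a b := by
            rw [Matrix.mul_apply]
            apply Finset.sum_congr rfl
            intro e _
            rw [Matrix.transpose_apply]
          rw [h2]
          rw [Matrix.transpose_mul, hGsym]
          simp only [hT]
          have h3 : P ((k : ℕ) - (i : ℕ)) * Γ * Γ⁻¹ * (Γ * (P ((k : ℕ) - (j : ℕ)))ᵀ) =
              P ((k : ℕ) - (i : ℕ)) * Γ * (P ((k : ℕ) - (j : ℕ)))ᵀ := by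
            rw [Matrix.mul_assoc (P ((k : ℕ) - (i : ℕ)) * Γ) Γ⁻¹,
              ← Matrix.mul_assoc Γ⁻¹ Γ, hGinv', Matrix.one_mul]
          rw [h3]
        · have hz : ∀ e : Fin d, (Kblk P Γ p q * Lblk Γ⁻¹ p) (i, a) (k, e) *
              (Kblk P Γ p q)ᵀ (k, e) (j, b) = 0 := by
            intro e
            rw [Matrix.transpose_apply]
            simp only [Kblk, if_neg hjk, mul_zero]
          rw [Finset.sum_congr rfl fun e _ => hz e, Finset.sum_const_zero]
          exact (hTzj (k : ℕ) (by omega)).symm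
      · have hz : ∀ e : Fin d, (Kblk P Γ p q * Lblk Γ⁻¹ p) (i, a) (k, e) *
            (Kblk P Γ p q)ᵀ (k, e) (j, b) = 0 := by
          intro e
          rw [hKL, if_neg hik, zero_mul]
        rw [Finset.sum_congr rfl fun e _ => hz e, Finset.sum_const_zero]
        exact (hTzi (k : ℕ) (by omega)).symm
    rw [Finset.sum_congr rfl fun k _ => hterm k, Fin.sum_univ_eq_sum_range]
  have hSdef : SchurS P Γ p q (i, a) (j, b) = Hblk P Γ q (i, a) (j, b) -
      (Kblk P Γ p q * (Lblk Γ p)⁻¹ * (Kblk P Γ p q)ᵀ) (i, a) (j, b) := rfl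
  rw [hSdef, hH, hK]
  have hs := Summable.sum_add_tsum_nat_add (f := T) p hTsum.of_abs
  have hdiff : (∑' n, T n) - ∑ n ∈ Finset.range p, T n = ∑' m, T (m + p) := by
    linarith [hs]
  rw [hdiff]
  apply tsum_congr
  intro m
  simp only [hT]
  rw [show m + p - (i : ℕ) = p + m - (i : ℕ) from by omega,
    show m + p - (j : ℕ) = p + m - (j : ℕ) from by omega]

end SchurAux

set_option maxHeartbeats 1000000 in
/-- Under (A₁), the `(i,j)` block of the Schur complement
`S = H - K L⁻¹ Kᵗ` equals `∑_{ℓ=1}^∞ P_{p-i+ℓ} Γ P_{p-j+ℓ}ᵗ`, the series converging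
absolutely; in particular `S` is positive semidefinite.
(Here `i, j : Fin q` are 0-based, so the 1-based block `(i+1, j+1)` and summand
`ℓ = m+1` give the exponents `p - (i+1) + (m+1) = p + m - i`.) -/
theorem schur_blocks_eq_tsum
    (d p q : ℕ) (hd : 0 < d) (hp : 0 < p) (hq : 0 < q)
    (A B P : ℕ → Mat d)
    (hA : ∀ k, k = 0 ∨ p < k → A k = 0) (hB : ∀ k, k = 0 ∨ q < k → B k = 0)
    (hP : IsPSeq A B q P)
    (hA1 : Causal B q)
    (Γ : Mat d) (hΓ : Γ.PosDef) :
    (∀ (i j : Fin q) (a b : Fin d),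
        Summable (fun m : ℕ => |(P (p + m - (i : ℕ)) * Γ * (P (p + m - (j : ℕ)))ᵀ) a b|) ∧
        SchurS P Γ p q (i, a) (j, b) =
          ∑' m : ℕ, (P (p + m - (i : ℕ)) * Γ * (P (p + m - (j : ℕ)))ᵀ) a b) ∧
      (SchurS P Γ p q).PosSemidef := by
  classical
  have hPsum : ∀ x y : Fin d, Summable fun k => |P k x y| := fun x y =>
    SchurAux.psum_summable p q A B P hA hB hP hA1 x y
  have hGsym : Γᵀ = Γ := SchurAux.symm_of_posdef hΓ
  have hsum : ∀ (i j : Fin q) (x y : Fin d),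
      Summable fun m : ℕ => |(P (p + m - (i : ℕ)) * Γ * (P (p + m - (j : ℕ)))ᵀ) x y| :=
    fun i j x y =>
      SchurAux.summable_entry_s1 P Γ _ _
        (fun x y => SchurAux.summable_comp _ (hPsum x y) _ p (i : ℕ) fun n => by omega)
        (fun x y => SchurAux.summable_comp _ (hPsum x y) _ p (j : ℕ) fun n => by omega) x y
  have hentry : ∀ (i j : Fin q) (a b : Fin d), SchurS P Γ p q (i, a) (j, b) =
      ∑' m : ℕ, (P (p + m - (i : ℕ)) * Γ * (P (p + m - (j : ℕ)))ᵀ) a b :=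
    fun i j a b => SchurAux.schur_entry p q P hP.1 hPsum Γ hΓ i j a b
  refine ⟨fun i j a b => ⟨hsum i j a b, hentry i j a b⟩,
    Matrix.PosSemidef.of_dotProduct_mulVec_nonneg ?_ ?_⟩
  · -- IsHermitian
    show (SchurS P Γ p q)ᴴ = SchurS P Γ p q
    ext ⟨i, a⟩ ⟨j, b⟩
    rw [Matrix.conjTranspose_apply, hentry j i b a, hentry i j a b, star_trivial]
    exact tsum_congr fun m => SchurAux.swap_entry (P (p + m - (j : ℕ))) (P (p + m - (i : ℕ))) Γ hGsym a b
  · -- quadratic form nonneg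
    intro x
    set W : ℕ → Matrix (Fin q × Fin d) (Fin d) ℝ :=
      fun m => Matrix.of fun κ c => P (p + m - (κ.1 : ℕ)) κ.2 c with hW
    have hFW : ∀ (m : ℕ) (i j : Fin q) (a b : Fin d),
        (P (p + m - (i : ℕ)) * Γ * (P (p + m - (j : ℕ)))ᵀ) a b =
          (W m * Γ * (W m)ᵀ) (i, a) (j, b) := by
      intro m i j a b
      rw [SchurAux.triple_apply_s1, SchurAux.triple_apply_s1]
      rfl
    have hent : ∀ κ κ' : Fin q × Fin d,
        HasSum (fun m => (W m * Γ * (W m)ᵀ) κ κ') (SchurS P Γ p q κ κ') := by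
      rintro ⟨i, a⟩ ⟨j, b⟩
      have hsm : Summable fun m : ℕ =>
          (P (p + m - (i : ℕ)) * Γ * (P (p + m - (j : ℕ)))ᵀ) a b := (hsum i j a b).of_abs
      have h1 := hsm.hasSum
      rw [← hentry i j a b] at h1
      have hfun : (fun m : ℕ => (P (p + m - (i : ℕ)) * Γ * (P (p + m - (j : ℕ)))ᵀ) a b) =
          fun m => (W m * Γ * (W m)ᵀ) (i, a) (j, b) := funext fun m => hFW m i j a b
      rw [hfun] at h1
      exact h1
    have expand : ∀ M : Matrix (Fin q × Fin d) (Fin q × Fin d) ℝ,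
        dotProduct x (M *ᵥ x) = ∑ κ, ∑ κ', x κ * M κ κ' * x κ' := by
      intro M
      simp [dotProduct, Matrix.mulVec, Finset.mul_sum, mul_assoc]
    have hquad : HasSum (fun m => dotProduct x ((W m * Γ * (W m)ᵀ) *ᵥ x))
        (dotProduct x (SchurS P Γ p q *ᵥ x)) := by
      simp only [expand]
      apply hasSum_sum
      intro κ _
      apply hasSum_sum
      intro κ' _
      exact ((hent κ κ').mul_left (x κ)).mul_right (x κ')
    have hterm : ∀ m, 0 ≤ dotProduct x ((W m * Γ * (W m)ᵀ) *ᵥ x) := by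
      intro m
      have h1 : (W m * Γ * (W m)ᵀ) *ᵥ x = W m *ᵥ (Γ *ᵥ ((W m)ᵀ *ᵥ x)) := by
        rw [Matrix.mulVec_mulVec, Matrix.mulVec_mulVec]
      rw [h1, dotProduct_mulVec]
      have h2 : Matrix.vecMul x (W m) = (W m)ᵀ *ᵥ x := by
        rw [← Matrix.transpose_transpose (W m), Matrix.vecMul_transpose,
          Matrix.transpose_transpose]
      rw [h2]
      have h3 := hΓ.posSemidef.dotProduct_mulVec_nonneg ((W m)ᵀ *ᵥ x)
      simpa using h3
    have h0 : (0 : ℝ) ≤ dotProduct x (SchurS P Γ p q *ᵥ x) :=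
      hquad.nonneg hterm
    simpa using h0

end
end
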